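/- arXiv:2109.02698 — 6 statements merged into one kernel-verified Lean document; each statement's English description precedes it below -/
import Mathlib

section
/- Let p be a prime, r a positive integer, F a finite field with p^r elements, and n ≥ 1. Then the set Up_n(F) of upper unitriangular n×n matrices over F is a subgroup of GL_n(F) and is a Sylow p-subgroup of GL_n(F). -/
open Matrix

/-- `M` is an upper unitriangular matrix: all diagonal entries are `1` and all
entries below the diagonal are `0`. -/
def IsUnitriangular {n : ℕ} {F : Type} [Field F]
    (M : Matrix (Fin n) (Fin n) F) : Prop :=
  (∀ i, M i i = 1) ∧ ∀ i j : Fin n, j < i → M i j = 0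

section Aux

variable {n : ℕ} {F : Type} [Field F]

lemma IsUnitriangular.one : IsUnitriangular (1 : Matrix (Fin n) (Fin n) F) :=
  ⟨fun i => Matrix.one_apply_eq i, fun _ j h => Matrix.one_apply_ne h.ne'⟩

lemma IsUnitriangular.mul {M N : Matrix (Fin n) (Fin n) F}
    (hM : IsUnitriangular M) (hN : IsUnitriangular N) : IsUnitriangular (M * N) := by
  constructor
  · intro i
    rw [Matrix.mul_apply, Finset.sum_eq_single i]
    · rw [hM.1, hN.1, one_mul]
    · intro k _ hk
      rcases lt_or_gt_of_ne hk with h | h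
      · rw [hM.2 i k h, zero_mul]
      · rw [hN.2 k i h, mul_zero]
    · simp
  · intro i j hji
    rw [Matrix.mul_apply]
    apply Finset.sum_eq_zero
    intro k _
    rcases lt_or_ge k i with h | h
    · rw [hM.2 i k h, zero_mul]
    · rw [hN.2 k j (lt_of_lt_of_le hji h), mul_zero]

lemma IsUnitriangular.pow {M : Matrix (Fin n) (Fin n) F}
    (hM : IsUnitriangular M) (k : ℕ) : IsUnitriangular (M ^ k) := by
  induction k with
  | zero => simpa using IsUnitriangular.one
  | succ k ih => rw [pow_succ]; exact ih.mul hM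

lemma IsUnitriangular.det {M : Matrix (Fin n) (Fin n) F}
    (hM : IsUnitriangular M) : M.det = 1 := by
  rw [Matrix.det_of_upperTriangular (fun i j hij => hM.2 i j hij)]
  simp [hM.1]

/-- The subgroup of `GL (Fin n) F` of upper unitriangular matrices. -/
def uniSubgroup (n : ℕ) (F : Type) [Field F] [Fintype F] : Subgroup (GL (Fin n) F) where
  carrier := {M | IsUnitriangular (M : Matrix (Fin n) (Fin n) F)}
  one_mem' := by simpa using IsUnitriangular.one (n := n) (F := F)
  mul_mem' := fun {a b} ha hb => by
    have : ((a * b : GL (Fin n) F) : Matrix (Fin n) (Fin n) F)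
        = (a : Matrix (Fin n) (Fin n) F) * b := rfl
    simpa [Set.mem_setOf_eq, this] using ha.mul hb
  inv_mem' := by
    intro M hM
    have h1 : M⁻¹ = M ^ (orderOf M - 1) := by
      have h0 : orderOf M ≠ 0 := (orderOf_pos M).ne'
      rw [eq_comm, eq_inv_iff_mul_eq_one, ← pow_succ, Nat.sub_add_cancel (Nat.one_le_iff_ne_zero.2 h0),
        pow_orderOf_eq_one]
    have h2 : ((M ^ (orderOf M - 1) : GL (Fin n) F) : Matrix (Fin n) (Fin n) F)
        = (M : Matrix (Fin n) (Fin n) F) ^ (orderOf M - 1) := Units.val_pow_eq_pow_val M _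
    show IsUnitriangular ((M⁻¹ : GL (Fin n) F) : Matrix (Fin n) (Fin n) F)
    rw [h1, h2]
    exact hM.pow _

variable [Fintype F]

/-- Pairs strictly above the diagonal. -/
abbrev UpIdx (n : ℕ) := {x : Fin n × Fin n // x.1 < x.2}

noncomputable def upIdxEquiv (n : ℕ) : UpIdx n ≃ Σ j : Fin n, Fin j.val where
  toFun x := ⟨x.1.2, ⟨x.1.1.val, x.2⟩⟩
  invFun y := ⟨(⟨y.2.val, lt_trans y.2.isLt y.1.isLt⟩, y.1), y.2.isLt⟩
  left_inv := by rintro ⟨⟨i, j⟩, h⟩; rfl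
  right_inv := by rintro ⟨j, i⟩; rfl

lemma card_upIdx (n : ℕ) : Nat.card (UpIdx n) = ∑ j : Fin n, j.val := by
  rw [Nat.card_congr (upIdxEquiv n), Nat.card_eq_fintype_card, Fintype.card_sigma]
  simp

noncomputable def uniFun (n : ℕ) (F : Type) [Field F] [Fintype F] :
    uniSubgroup n F → (UpIdx n → F) :=
  fun M x => (M.1 : Matrix (Fin n) (Fin n) F) x.1.1 x.1.2

lemma uniFun_bijective (n : ℕ) (F : Type) [Field F] [Fintype F] :
    Function.Bijective (uniFun n F) := by
  constructor
  · rintro ⟨M, hM⟩ ⟨N, hN⟩ h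
    ext i j
    rcases lt_trichotomy i j with hij | rfl | hij
    · exact congrFun h ⟨(i, j), hij⟩
    · rw [hM.1, hN.1]
    · rw [hM.2 i j hij, hN.2 i j hij]
  · intro g
    set A : Matrix (Fin n) (Fin n) F :=
      fun i j => if h : i < j then g ⟨(i, j), h⟩ else if i = j then 1 else 0 with hA
    have hAu : IsUnitriangular A := by
      constructor
      · intro i; simp [hA]
      · intro i j hji
        simp only [hA]
        rw [dif_neg (by exact fun h => absurd (lt_trans h hji) (lt_irrefl i)),
          if_neg (by exact fun h => absurd hji (h ▸ lt_irrefl i))]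
    refine ⟨⟨Matrix.GeneralLinearGroup.mk'' A (by rw [hAu.det]; exact isUnit_one), ?_⟩, ?_⟩
    · show IsUnitriangular A
      exact hAu
    · funext x
      show A x.1.1 x.1.2 = g x
      rw [hA]
      simp only [dif_pos x.2]
    
lemma card_uniSubgroup (n : ℕ) (F : Type) [Field F] [Fintype F] :
    Nat.card (uniSubgroup n F) = Fintype.card F ^ (∑ j : Fin n, j.val) := by
  rw [Nat.card_eq_of_bijective _ (uniFun_bijective n F), Nat.card_fun, card_upIdx,
    Nat.card_eq_fintype_card]

end Aux

/-- The set of upper unitriangular `n × n` matrices over a finite field `F` with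
`p ^ r` elements is (the underlying set of) a Sylow `p`-subgroup of `GL n F`. -/
theorem unitriangular_is_sylow (p r n : ℕ) (hp : p.Prime) (hr : 0 < r) (hn : 1 ≤ n)
    (F : Type) [Field F] [Fintype F] (hF : Fintype.card F = p ^ r) :
    ∃ P : Sylow p (GL (Fin n) F),
      ∀ M : GL (Fin n) F,
        M ∈ P ↔ IsUnitriangular (M : Matrix (Fin n) (Fin n) F) := by
  haveI := Fact.mk hp
  have hq1 : 1 < p ^ r := Nat.one_lt_pow hr.ne' hp.one_lt
  set S := ∑ j : Fin n, j.val with hS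
  -- the factorization of the cardinality of GL
  have hGL : Nat.card (GL (Fin n) F) = p ^ (r * S) * ∏ i : Fin n, ((p ^ r) ^ (n - i.val) - 1) := by
    rw [Matrix.card_GL_field, hF]
    have : ∀ i : Fin n, (p ^ r) ^ n - (p ^ r) ^ i.val
        = (p ^ r) ^ i.val * ((p ^ r) ^ (n - i.val) - 1) := by
      intro i
      rw [Nat.mul_sub, mul_one, ← pow_add, Nat.add_sub_cancel' i.isLt.le]
    rw [Finset.prod_congr rfl (fun i _ => this i), Finset.prod_mul_distrib,
      Finset.prod_pow_eq_pow_sum, ← hS, ← pow_mul]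
  have hm0 : ∀ i : Fin n, 0 < (p ^ r) ^ (n - i.val) - 1 := by
    intro i
    have : 1 < (p ^ r) ^ (n - i.val) := Nat.one_lt_pow (by omega) hq1
    omega
  have hpm : ¬ p ∣ ∏ i : Fin n, ((p ^ r) ^ (n - i.val) - 1) := by
    intro hdvd
    obtain ⟨i, _, hi⟩ := (hp.prime.dvd_finset_prod_iff _).1 hdvd
    have h1 : p ∣ (p ^ r) ^ (n - i.val) := by
      rw [← pow_mul]
      exact dvd_pow_self p (Nat.mul_ne_zero hr.ne' (Nat.sub_ne_zero_of_lt i.isLt))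
    have h2 := Nat.dvd_sub h1 hi
    rw [Nat.sub_sub_self (Nat.one_le_of_lt (Nat.one_lt_pow (by omega) hq1))] at h2
    exact absurd (Nat.dvd_one.1 h2) hp.one_lt.ne'
  have hfact : (Nat.card (GL (Fin n) F)).factorization p = r * S := by
    rw [hGL, Nat.factorization_mul (pow_ne_zero _ hp.pos.ne')
      (Finset.prod_pos (fun i _ => hm0 i)).ne']
    rw [Finsupp.add_apply, hp.factorization_pow, Finsupp.single_eq_same,
      Nat.factorization_eq_zero_of_not_dvd hpm, add_zero]
  have hcard : Nat.card (uniSubgroup n F) = p ^ (Nat.card (GL (Fin n) F)).factorization p := by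
    rw [hfact, card_uniSubgroup, hF, ← pow_mul, ← hS]
  exact ⟨Sylow.ofCard (uniSubgroup n F) hcard, fun M => Iff.rfl⟩
end

section
/- Let p be a prime, r a positive integer, F a finite field with p^r elements, and n ≥ 3. Let H_n(F) be the subgroup of Up_n(F) of unitriangular matrices whose (i,j) entry is 0 for all 2 ≤ i < j ≤ n−1, and let K be the subgroup of Up_n(F) of unitriangular matrices M with M_{1,j} = 0 for all j > 1 and M_{i,n} = 0 for all i < n. Then H_n(F) is a normal subgroup of Up_n(F), H_n(F) ∩ K is trivial, and H_n(F)·K = Up_n(F); moreover K is isomorphic to Up_{n−2}(F). (Thus Up_n(F) is the internal semidirect product H_n(F) ⋊ Up_{n−2}(F).) -/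
open Matrix

/-- `M` belongs to the Heisenberg subgroup of `Up_n(F)`. -/
def IsHeisenberg {n : ℕ} {F : Type} [Field F]
    (M : Matrix (Fin n) (Fin n) F) : Prop :=
  IsUnitriangular M ∧
    ∀ i j : Fin n, 1 ≤ (i : ℕ) → (i : ℕ) < (j : ℕ) → (j : ℕ) < n - 1 → M i j = 0

/-- `M` belongs to the complement `K`: it is unitriangular, its first row vanishes off
the diagonal, and its last column vanishes off the diagonal. -/
def IsComplementK {n : ℕ} {F : Type} [Field F]
    (M : Matrix (Fin n) (Fin n) F) : Prop :=
  IsUnitriangular M ∧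
    (∀ i j : Fin n, (i : ℕ) = 0 → (j : ℕ) ≠ 0 → M i j = 0) ∧
    (∀ i j : Fin n, (j : ℕ) = n - 1 → (i : ℕ) ≠ n - 1 → M i j = 0)

section Aux

variable {n : ℕ} {F : Type} [Field F]

lemma IsUnitriangular.isUnit {M : Matrix (Fin n) (Fin n) F} (hM : IsUnitriangular M) :
    IsUnit M := by
  rw [Matrix.isUnit_iff_isUnit_det]
  have ht : M.BlockTriangular id := by
    intro i j h
    exact hM.2 i j h
  rw [Matrix.det_of_upperTriangular ht]
  simp [hM.1]

lemma unitri_inv (M : GL (Fin n) F) (hM : IsUnitriangular (M : Matrix (Fin n) (Fin n) F)) :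
    IsUnitriangular ((M⁻¹ : GL (Fin n) F) : Matrix (Fin n) (Fin n) F) := by
  set A : Matrix (Fin n) (Fin n) F := (M : Matrix (Fin n) (Fin n) F) with hA
  set B : Matrix (Fin n) (Fin n) F := ((M⁻¹ : GL (Fin n) F) : Matrix (Fin n) (Fin n) F) with hB
  have hAB : A * B = 1 := M.mul_inv
  have key : ∀ k : ℕ, ∀ i j : Fin n, j < i → n - (i : ℕ) ≤ k → B i j = 0 := by
    intro k
    induction k with
    | zero => intro i j hji hk; have := i.isLt; omega
    | succ k ih =>
      intro i j hji hk
      have h1 : (A * B) i j = 0 := by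
        rw [hAB]
        exact Matrix.one_apply_ne hji.ne'
      rw [Matrix.mul_apply, Finset.sum_eq_single i] at h1
      · rwa [hM.1, one_mul] at h1
      · intro a _ ha
        rcases lt_or_gt_of_ne ha with h | h
        · rw [hM.2 i a h, zero_mul]
        · rw [ih a j (hji.trans h) (by have := Fin.lt_def.mp h; omega), mul_zero]
      · simp
  have low : ∀ i j : Fin n, j < i → B i j = 0 := fun i j h => key n i j h (by omega)
  refine ⟨?_, low⟩
  intro i
  have h1 : (A * B) i i = 1 := by rw [hAB]; exact Matrix.one_apply_eq i
  rw [Matrix.mul_apply, Finset.sum_eq_single i] at h1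
  · rwa [hM.1, one_mul] at h1
  · intro a _ ha
    rcases lt_or_gt_of_ne ha with h | h
    · rw [hM.2 i a h, zero_mul]
    · rw [low a i h, mul_zero]
  · simp

lemma complementK_inv (M : GL (Fin n) F)
    (hM : IsComplementK (M : Matrix (Fin n) (Fin n) F)) :
    IsComplementK ((M⁻¹ : GL (Fin n) F) : Matrix (Fin n) (Fin n) F) := by
  set A : Matrix (Fin n) (Fin n) F := (M : Matrix (Fin n) (Fin n) F) with hA
  set B : Matrix (Fin n) (Fin n) F := ((M⁻¹ : GL (Fin n) F) : Matrix (Fin n) (Fin n) F) with hB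
  have hAB : A * B = 1 := M.mul_inv
  have hBA : B * A = 1 := M.inv_mul
  refine ⟨unitri_inv M hM.1, ?_, ?_⟩
  · intro i j hi0 hj0
    have hij : i ≠ j := by
      intro h; apply hj0; rw [← h, hi0]
    have h1 : (A * B) i j = 0 := by rw [hAB]; exact Matrix.one_apply_ne hij
    rw [Matrix.mul_apply, Finset.sum_eq_single i] at h1
    · rwa [hM.1.1, one_mul] at h1
    · intro a _ ha
      have ha0 : (a : ℕ) ≠ 0 := by
        intro h; apply ha; exact Fin.ext (by omega)
      rw [hM.2.1 i a hi0 ha0, zero_mul]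
    · simp
  · intro i j hj hi
    have hij : i ≠ j := by
      intro h; apply hi; rw [h, hj]
    have h1 : (B * A) i j = 0 := by rw [hBA]; exact Matrix.one_apply_ne hij
    rw [Matrix.mul_apply, Finset.sum_eq_single j] at h1
    · rwa [hM.1.1, mul_one] at h1
    · intro a _ ha
      have ha' : (a : ℕ) ≠ n - 1 := by
        intro h; apply ha; exact Fin.ext (by omega)
      rw [hM.2.2 a j hj ha', mul_zero]
    · simp

lemma sum_fin_add_two {m : ℕ} {α : Type} [AddCommMonoid α] (f : Fin (m + 2) → α) :
    ∑ a, f a = f 0 + (∑ b : Fin m, f ⟨b.val + 1, by omega⟩) + f (Fin.last (m + 1)) := by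
  rw [Fin.sum_univ_succ, Fin.sum_univ_castSucc, ← add_assoc]
  congr 1

def innerBlock {m : ℕ} {F : Type} [Field F] (A : Matrix (Fin (m + 2)) (Fin (m + 2)) F) :
    Matrix (Fin m) (Fin m) F := fun i j => A ⟨i.val + 1, by omega⟩ ⟨j.val + 1, by omega⟩

lemma innerBlock_mul {m : ℕ} (A B : Matrix (Fin (m + 2)) (Fin (m + 2)) F)
    (hB : ∀ j : Fin (m + 2), (j : ℕ) ≠ 0 → B 0 j = 0)
    (hA : ∀ i : Fin (m + 2), (i : ℕ) ≠ m + 1 → A i (Fin.last (m + 1)) = 0) :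
    innerBlock (A * B) = innerBlock A * innerBlock B := by
  ext i j
  show (A * B) _ _ = ∑ b, innerBlock A i b * innerBlock B b j
  rw [Matrix.mul_apply, sum_fin_add_two]
  have h0 : B 0 ⟨j.val + 1, by omega⟩ = 0 := hB _ (by simp)
  have hl : A ⟨i.val + 1, by omega⟩ (Fin.last (m + 1)) = 0 := hA _ (by simp; omega)
  rw [h0, hl, mul_zero, zero_mul, add_zero, zero_add]
  rfl

lemma innerBlock_one {m : ℕ} :
    innerBlock (1 : Matrix (Fin (m + 2)) (Fin (m + 2)) F) = (1 : Matrix (Fin m) (Fin m) F) := by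
  ext i j
  show (1 : Matrix (Fin (m + 2)) (Fin (m + 2)) F) _ _ = (1 : Matrix (Fin m) (Fin m) F) i j
  rcases eq_or_ne i j with rfl | h
  · rw [Matrix.one_apply_eq, Matrix.one_apply_eq]
  · rw [Matrix.one_apply_ne (fun hc => h (Fin.ext (by
      have := congrArg Fin.val hc
      simpa using this))), Matrix.one_apply_ne h]

lemma complementK_equiv {m : ℕ} {F : Type} [Field F]
    (K : Subgroup (GL (Fin (m + 2)) F))
    (hK : ∀ M : GL (Fin (m + 2)) F,
      M ∈ K ↔ IsComplementK (M : Matrix (Fin (m + 2)) (Fin (m + 2)) F))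
    (U' : Subgroup (GL (Fin m) F))
    (hU' : ∀ M : GL (Fin m) F,
      M ∈ U' ↔ IsUnitriangular (M : Matrix (Fin m) (Fin m) F)) :
    Nonempty (↥K ≃* ↥U') := by
  have hCK : ∀ x : ↥K,
      IsComplementK ((x.1 : GL (Fin (m + 2)) F) : Matrix (Fin (m + 2)) (Fin (m + 2)) F) :=
    fun x => (hK x.1).mp x.2
  have rowK : ∀ X : Matrix (Fin (m + 2)) (Fin (m + 2)) F, IsComplementK X →
      ∀ j : Fin (m + 2), (j : ℕ) ≠ 0 → X 0 j = 0 := by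
    intro X hX j hj
    exact hX.2.1 0 j (by simp) hj
  have colK : ∀ X : Matrix (Fin (m + 2)) (Fin (m + 2)) F, IsComplementK X →
      ∀ i : Fin (m + 2), (i : ℕ) ≠ m + 1 → X i (Fin.last (m + 1)) = 0 := by
    intro X hX i hi
    exact hX.2.2 i (Fin.last (m + 1)) (by rw [Fin.val_last]; omega) hi
  have memU' : ∀ X : Matrix (Fin (m + 2)) (Fin (m + 2)) F, IsComplementK X →
      IsUnitriangular (innerBlock X) := by
    intro X hX
    constructor
    · intro i
      exact hX.1.1 _
    · intro i j hji
      have hv := Fin.lt_def.mp hji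
      exact hX.1.2 _ _ (show (j : ℕ) + 1 < (i : ℕ) + 1 by omega)
  have hIBinv : ∀ x : ↥K,
      innerBlock ((x.1 : Matrix (Fin (m + 2)) (Fin (m + 2)) F)) *
        innerBlock (((x.1)⁻¹ : GL (Fin (m + 2)) F) : Matrix (Fin (m + 2)) (Fin (m + 2)) F)
          = 1 ∧
      innerBlock (((x.1)⁻¹ : GL (Fin (m + 2)) F) : Matrix (Fin (m + 2)) (Fin (m + 2)) F) *
        innerBlock ((x.1 : Matrix (Fin (m + 2)) (Fin (m + 2)) F)) = 1 := by
    intro x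
    have hx := hCK x
    have hxi := complementK_inv x.1 hx
    constructor
    · rw [← innerBlock_mul _ _ (rowK _ hxi) (colK _ hx), Units.mul_inv, innerBlock_one]
    · rw [← innerBlock_mul _ _ (rowK _ hx) (colK _ hxi), Units.inv_mul, innerBlock_one]
  let φ : ↥K → ↥U' := fun x : ↥K =>
    (⟨⟨innerBlock ((x.1 : Matrix (Fin (m + 2)) (Fin (m + 2)) F)),
      innerBlock (((x.1)⁻¹ : GL (Fin (m + 2)) F) : Matrix (Fin (m + 2)) (Fin (m + 2)) F),
      (hIBinv x).1, (hIBinv x).2⟩,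
      (hU' _).mpr (memU' _ (hCK x))⟩ : ↥U')
  have hφval : ∀ x : ↥K, ((φ x).1 : Matrix (Fin m) (Fin m) F)
      = innerBlock ((x.1 : Matrix (Fin (m + 2)) (Fin (m + 2)) F)) := fun x => rfl
  have hmul : ∀ a b : ↥K, φ (a * b) = φ a * φ b := by
    intro a b
    apply Subtype.ext
    apply Units.ext
    rw [hφval]
    show innerBlock (((a.1 * b.1 : GL (Fin (m + 2)) F)) : Matrix (Fin (m + 2)) (Fin (m + 2)) F)
      = innerBlock ((a.1 : Matrix (Fin (m + 2)) (Fin (m + 2)) F)) *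
        innerBlock ((b.1 : Matrix (Fin (m + 2)) (Fin (m + 2)) F))
    exact innerBlock_mul _ _ (rowK _ (hCK b)) (colK _ (hCK a))
  have hinj : Function.Injective φ := by
    intro a b hab
    have h1 : innerBlock ((a.1 : Matrix (Fin (m + 2)) (Fin (m + 2)) F))
        = innerBlock ((b.1 : Matrix (Fin (m + 2)) (Fin (m + 2)) F)) := by
      rw [← hφval a, ← hφval b, hab]
    have hX := hCK a
    have hY := hCK b
    apply Subtype.ext
    apply Units.ext
    apply Matrix.ext
    intro i j
    rcases lt_trichotomy i j with hij | rfl | hij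
    · have hv := Fin.lt_def.mp hij
      have hilt := i.isLt
      have hjlt := j.isLt
      rcases Nat.eq_zero_or_pos (i : ℕ) with h0 | h0
      · rw [hX.2.1 i j h0 (by omega), hY.2.1 i j h0 (by omega)]
      · rcases eq_or_ne (j : ℕ) (m + 2 - 1) with hl | hl
        · rw [hX.2.2 i j hl (by omega), hY.2.2 i j hl (by omega)]
        · have e : ∀ Z : Matrix (Fin (m + 2)) (Fin (m + 2)) F,
              innerBlock Z ⟨(i : ℕ) - 1, by omega⟩ ⟨(j : ℕ) - 1, by omega⟩ = Z i j := by
            intro Z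
            show Z ⟨(i : ℕ) - 1 + 1, by omega⟩ ⟨(j : ℕ) - 1 + 1, by omega⟩ = Z i j
            rw [show (⟨(i : ℕ) - 1 + 1, by omega⟩ : Fin (m + 2)) = i from
                Fin.ext (show (i : ℕ) - 1 + 1 = (i : ℕ) from by omega),
              show (⟨(j : ℕ) - 1 + 1, by omega⟩ : Fin (m + 2)) = j from
                Fin.ext (show (j : ℕ) - 1 + 1 = (j : ℕ) from by omega)]
          rw [← e ((a.1 : Matrix (Fin (m + 2)) (Fin (m + 2)) F)),
            ← e ((b.1 : Matrix (Fin (m + 2)) (Fin (m + 2)) F)), h1]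
    · rw [hX.1.1, hY.1.1]
    · rw [hX.1.2 i j hij, hY.1.2 i j hij]
  have hsurj : Function.Surjective φ := by
    intro y
    have hN : IsUnitriangular ((y.1 : GL (Fin m) F) : Matrix (Fin m) (Fin m) F) :=
      (hU' y.1).mp y.2
    set Xm : Matrix (Fin (m + 2)) (Fin (m + 2)) F := fun i j =>
      if h : 1 ≤ (i : ℕ) ∧ (i : ℕ) ≤ m ∧ 1 ≤ (j : ℕ) ∧ (j : ℕ) ≤ m then
        ((y.1 : GL (Fin m) F) : Matrix (Fin m) (Fin m) F)
          ⟨(i : ℕ) - 1, by omega⟩ ⟨(j : ℕ) - 1, by omega⟩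
      else if i = j then 1 else 0 with hXm
    have hXU : IsUnitriangular Xm := by
      constructor
      · intro i
        by_cases h : 1 ≤ (i : ℕ) ∧ (i : ℕ) ≤ m ∧ 1 ≤ (i : ℕ) ∧ (i : ℕ) ≤ m
        · simp only [hXm]
          rw [dif_pos h]
          exact hN.1 _
        · simp only [hXm]
          rw [dif_neg h]
          simp
      · intro i j hji
        have hv := Fin.lt_def.mp hji
        by_cases h : 1 ≤ (i : ℕ) ∧ (i : ℕ) ≤ m ∧ 1 ≤ (j : ℕ) ∧ (j : ℕ) ≤ m
        · simp only [hXm]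
          rw [dif_pos h]
          exact hN.2 _ _ (show (j : ℕ) - 1 < (i : ℕ) - 1 by omega)
        · simp only [hXm]
          rw [dif_neg h, if_neg hji.ne']
    have hXK : IsComplementK Xm := by
      refine ⟨hXU, ?_, ?_⟩
      · intro i j hi0 hj0
        simp only [hXm]
        rw [dif_neg (by omega), if_neg (fun h => hj0 (by rw [← h, hi0]))]
      · intro i j hj hi
        have : (j : ℕ) = m + 1 := by omega
        simp only [hXm]
        rw [dif_neg (by omega), if_neg (fun h => hi (by rw [h, hj]))]
    obtain ⟨w, hw⟩ : ∃ w : GL (Fin (m + 2)) F,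
        (w : Matrix (Fin (m + 2)) (Fin (m + 2)) F) = Xm := hXU.isUnit
    have hwK : w ∈ K := (hK w).mpr (by rw [hw]; exact hXK)
    refine ⟨⟨w, hwK⟩, ?_⟩
    apply Subtype.ext
    apply Units.ext
    rw [hφval]
    apply Matrix.ext
    intro i j
    have hilt : (i : ℕ) < m := i.isLt
    have hjlt : (j : ℕ) < m := j.isLt
    show innerBlock ((w : Matrix (Fin (m + 2)) (Fin (m + 2)) F)) i j
      = ((y.1 : GL (Fin m) F) : Matrix (Fin m) (Fin m) F) i j
    rw [hw]
    show Xm ⟨(i : ℕ) + 1, by omega⟩ ⟨(j : ℕ) + 1, by omega⟩ = _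
    simp only [hXm]
    rw [dif_pos (show 1 ≤ (i : ℕ) + 1 ∧ (i : ℕ) + 1 ≤ m ∧ 1 ≤ (j : ℕ) + 1 ∧ (j : ℕ) + 1 ≤ m
      by omega)]
    rw [show (⟨(i : ℕ) + 1 - 1, by omega⟩ : Fin m) = i from
        Fin.ext (show (i : ℕ) + 1 - 1 = (i : ℕ) from by omega),
      show (⟨(j : ℕ) + 1 - 1, by omega⟩ : Fin m) = j from
        Fin.ext (show (j : ℕ) + 1 - 1 = (j : ℕ) from by omega)]
  exact ⟨MulEquiv.ofBijective (MonoidHom.mk' φ hmul) ⟨hinj, hsurj⟩⟩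

end Aux

set_option maxHeartbeats 2000000

/-- `Up_n(F)` is the internal semidirect product `H_n(F) ⋊ Up_{n-2}(F)`:
`H_n(F)` is normal in `Up_n(F)`, `H_n(F) ∩ K` is trivial, `H_n(F) · K = Up_n(F)`,
and `K ≅ Up_{n-2}(F)`. -/
theorem unitriangular_semidirect_heisenberg (p r n : ℕ) (hp : p.Prime) (hr : 0 < r)
    (hn : 3 ≤ n) (F : Type) [Field F] [Fintype F] (hF : Fintype.card F = p ^ r)
    (U : Subgroup (GL (Fin n) F))
    (hU : ∀ M : GL (Fin n) F, M ∈ U ↔ IsUnitriangular (M : Matrix (Fin n) (Fin n) F))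
    (H : Subgroup (GL (Fin n) F))
    (hH : ∀ M : GL (Fin n) F, M ∈ H ↔ IsHeisenberg (M : Matrix (Fin n) (Fin n) F))
    (K : Subgroup (GL (Fin n) F))
    (hK : ∀ M : GL (Fin n) F, M ∈ K ↔ IsComplementK (M : Matrix (Fin n) (Fin n) F))
    (U' : Subgroup (GL (Fin (n - 2)) F))
    (hU' : ∀ M : GL (Fin (n - 2)) F,
      M ∈ U' ↔ IsUnitriangular (M : Matrix (Fin (n - 2)) (Fin (n - 2)) F)) :
    (∀ u ∈ U, ∀ h ∈ H, u * h * u⁻¹ ∈ H) ∧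
    H ⊓ K = ⊥ ∧
    (∀ u ∈ U, ∃ h ∈ H, ∃ k ∈ K, u = h * k) ∧
    Nonempty (↥K ≃* ↥U') := by
  refine ⟨?_, ?_, ?_, ?_⟩
  -- Part 1 : normality
  · intro u hu g hg
    rw [hU] at hu
    rw [hH] at hg
    rw [hH]
    have hBu := unitri_inv u hu
    constructor
    · exact (hu.mul hg.1).mul hBu
    · intro i j hi1 hij hjn
      set A : Matrix (Fin n) (Fin n) F := (u : Matrix (Fin n) (Fin n) F) with hA
      set G : Matrix (Fin n) (Fin n) F := (g : Matrix (Fin n) (Fin n) F) with hG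
      set B : Matrix (Fin n) (Fin n) F := ((u⁻¹ : GL (Fin n) F) : Matrix (Fin n) (Fin n) F)
        with hBdef
      have step : ∀ b : Fin n, ((A * G) i b) * B b j = A i b * B b j := by
        intro b
        rcases lt_or_ge j b with hb | hb
        · rw [hBu.2 b j hb, mul_zero, mul_zero]
        · congr 1
          rw [Matrix.mul_apply, Finset.sum_eq_single b]
          · rw [hg.1.1 b, mul_one]
          · intro a _ ha
            rcases lt_or_gt_of_ne ha with h | h
            · rcases Nat.eq_zero_or_pos (a : ℕ) with h0 | h0
              · rw [hu.2 i a (Fin.lt_def.mpr (by omega)), zero_mul]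
              · rw [hg.2 a b (by omega) (Fin.lt_def.mp h)
                  (by have := Fin.le_def.mp hb; omega), mul_zero]
            · rw [hg.1.2 a b h, mul_zero]
          · simp
      have hij' : i ≠ j := by
        intro h; rw [h] at hij; omega
      have : ((u * g * u⁻¹ : GL (Fin n) F) : Matrix (Fin n) (Fin n) F) i j
          = (A * G * B) i j := rfl
      rw [this, Matrix.mul_apply]
      calc ∑ b, (A * G) i b * B b j = ∑ b, A i b * B b j :=
            Finset.sum_congr rfl fun b _ => step b
        _ = (A * B) i j := (Matrix.mul_apply).symm
        _ = (1 : Matrix (Fin n) (Fin n) F) i j := by rw [u.mul_inv]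
        _ = 0 := Matrix.one_apply_ne hij'
  -- Part 2 : trivial intersection
  · rw [eq_bot_iff]
    intro x hx
    have hxH := (hH x).mp hx.1
    have hxK := (hK x).mp hx.2
    rw [Subgroup.mem_bot]
    refine Units.ext (Matrix.ext fun i j => ?_)
    show (x : Matrix (Fin n) (Fin n) F) i j = (1 : Matrix (Fin n) (Fin n) F) i j
    rcases lt_trichotomy i j with hij | rfl | hij
    · rw [Matrix.one_apply_ne hij.ne]
      have hvij := Fin.lt_def.mp hij
      rcases Nat.eq_zero_or_pos (i : ℕ) with h0 | h0
      · exact hxK.2.1 i j h0 (by omega)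
      · rcases eq_or_ne (j : ℕ) (n - 1) with hl | hl
        · exact hxK.2.2 i j hl (by omega)
        · exact hxH.2 i j (by omega) hvij (by have := j.isLt; omega)
    · rw [Matrix.one_apply_eq]
      exact hxH.1.1 i
    · rw [Matrix.one_apply_ne hij.ne', hxH.1.2 i j hij]
  -- Part 3 : H * K = U
  · intro u hu
    rw [hU] at hu
    set A : Matrix (Fin n) (Fin n) F := (u : Matrix (Fin n) (Fin n) F) with hA
    set Km : Matrix (Fin n) (Fin n) F := fun i j =>
      if (i : ℕ) = 0 ∨ (j : ℕ) = n - 1 then (if i = j then 1 else 0) else A i j with hKm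
    have hKmU : IsUnitriangular Km := by
      constructor
      · intro i
        by_cases h : (i : ℕ) = 0 ∨ (i : ℕ) = n - 1
        · simp only [hKm, h, if_pos, if_true]
        · simp only [hKm, h, if_neg, if_false]
          exact hu.1 i
      · intro i j hji
        by_cases h : (i : ℕ) = 0 ∨ (j : ℕ) = n - 1
        · simp only [hKm, h, if_pos, if_true]
          rw [if_neg hji.ne']
        · simp only [hKm, h, if_neg, if_false]
          exact hu.2 i j hji
    obtain ⟨k, hk⟩ : ∃ k : GL (Fin n) F, (k : Matrix (Fin n) (Fin n) F) = Km := hKmU.isUnit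
    have hkCK : IsComplementK (k : Matrix (Fin n) (Fin n) F) := by
      rw [hk]
      refine ⟨hKmU, ?_, ?_⟩
      · intro i j hi0 hj0
        simp only [hKm, hi0, true_or, if_pos, if_true]
        rw [if_neg (fun h => hj0 (by rw [← h, hi0]))]
      · intro i j hj hi
        have : (i : ℕ) = 0 ∨ (j : ℕ) = n - 1 := Or.inr hj
        simp only [hKm, this, if_pos, if_true]
        rw [if_neg (fun h => hi (by rw [h, hj]))]
    have hkK : k ∈ K := (hK k).mpr hkCK
    have hBCK : IsComplementK ((k⁻¹ : GL (Fin n) F) : Matrix (Fin n) (Fin n) F) :=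
      complementK_inv k hkCK
    set B : Matrix (Fin n) (Fin n) F := ((k⁻¹ : GL (Fin n) F) : Matrix (Fin n) (Fin n) F)
      with hBdef
    refine ⟨u * k⁻¹, ?_, k, hkK, (inv_mul_cancel_right u k).symm⟩
    rw [hH]
    constructor
    · exact hu.mul (unitri_inv k (hk ▸ hKmU))
    · intro i j hi1 hij hjn
      have hij' : i ≠ j := fun h => by rw [h] at hij; omega
      have : ((u * k⁻¹ : GL (Fin n) F) : Matrix (Fin n) (Fin n) F) i j = (A * B) i j := rfl
      rw [this, Matrix.mul_apply]
      have step : ∀ a : Fin n, A i a * B a j = Km i a * B a j := by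
        intro a
        rcases Nat.eq_zero_or_pos (a : ℕ) with h0 | h0
        · rw [hBCK.2.1 a j h0 (by omega), mul_zero, mul_zero]
        · rcases eq_or_ne (a : ℕ) (n - 1) with hl | hl
          · rw [hBCK.1.2 a j (Fin.lt_def.mpr (by omega)), mul_zero, mul_zero]
          · have : Km i a = A i a := by
              simp only [hKm]
              rw [if_neg (by push_neg; exact ⟨by omega, hl⟩)]
            rw [this]
      calc ∑ a, A i a * B a j = ∑ a, Km i a * B a j :=
            Finset.sum_congr rfl fun a _ => step a
        _ = (Km * B) i j := (Matrix.mul_apply).symm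
        _ = ((k : Matrix (Fin n) (Fin n) F) * B) i j := by rw [hk]
        _ = (1 : Matrix (Fin n) (Fin n) F) i j := by rw [k.mul_inv]
        _ = 0 := Matrix.one_apply_ne hij'
  -- Part 4 : K ≃* U'
  · obtain ⟨m, rfl⟩ : ∃ m, n = m + 2 := ⟨n - 2, by omega⟩
    exact complementK_equiv K hK U' hU'
end

section
/- Let p be a prime, r a positive integer, F a finite field with p^r elements, and n ≥ 3. For every nontrivial group homomorphism ψ from the additive group of F to the multiplicative group ℂ^×, there exists a complex representation ρ of Up_n(F) of dimension p^{r(n−2)} such that for every a ∈ F the central element I + a·E_{1,n} acts as the scalar ψ(a), i.e., ρ(I + a·E_{1,n}) = ψ(a)·id. -/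
open Matrix

namespace URepAux

open scoped Classical

variable {m : ℕ} {F : Type} [Field F] [Fintype F]

def ι (m : ℕ) (j : Fin (m+1)) : Fin (m+3) := ⟨j.1+1, by omega⟩

def z3 (m : ℕ) : Fin (m+3) := ⟨0, by omega⟩
def l3 (m : ℕ) : Fin (m+3) := ⟨m+2, by omega⟩

lemma z3_lt_iota (j : Fin (m+1)) : z3 m < ι m j := by
  simp [z3, ι, Fin.lt_def]

lemma iota_lt_l3 (j : Fin (m+1)) : ι m j < l3 m := by
  simp [l3, ι, Fin.lt_def]
  have := j.2; omega

lemma z3_lt_l3 : z3 m < l3 m := by simp [z3, l3, Fin.lt_def]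

lemma iota_inj (j k : Fin (m+1)) : ι m j = ι m k ↔ j = k := by
  constructor
  · intro h; ext; simpa [ι, Fin.ext_iff] using h
  · rintro rfl; rfl

lemma sum_split {α : Type*} [AddCommMonoid α] (f : Fin (m+3) → α) :
    ∑ s, f s = f (z3 m) + (∑ j, f (ι m j)) + f (l3 m) := by
  have h0 : (0 : Fin (m+3)) = z3 m := by ext; simp [z3]
  have hl : (Fin.last (m+1)).succ = l3 m := by ext; simp [l3]
  have hι : ∀ j : Fin (m+1), (Fin.castSucc j).succ = ι m j := by
    intro j; ext; simp [ι]
  rw [Fin.sum_univ_succ, Fin.sum_univ_castSucc, ← add_assoc, h0, hl]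
  simp [hι]


/-- The affine action on the index set (first-row coordinates). -/
def Tmap (M : Matrix (Fin (m+3)) (Fin (m+3)) F) (t : Fin (m+1) → F) :
    Fin (m+1) → F :=
  fun k => M (z3 m) (ι m k) + ∑ j, t j * M (ι m j) (ι m k)

/-- The multiplier cocycle. -/
def cval (ψ : Multiplicative F →* ℂˣ) (M : Matrix (Fin (m+3)) (Fin (m+3)) F)
    (t : Fin (m+1) → F) : ℂˣ :=
  ψ (Multiplicative.ofAdd (M (z3 m) (l3 m) + ∑ j, t j * M (ι m j) (l3 m)))

/-- The monomial matrix of the representation. -/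
noncomputable def ρmat (ψ : Multiplicative F →* ℂˣ)
    (M : Matrix (Fin (m+3)) (Fin (m+3)) F) :
    Matrix (Fin (m+1) → F) (Fin (m+1) → F) ℂ :=
  fun t s => if s = Tmap M t then (cval ψ M t : ℂ) else 0

lemma Tmap_mul (M N : Matrix (Fin (m+3)) (Fin (m+3)) F)
    (hM : IsUnitriangular M) (hN : IsUnitriangular N) (t : Fin (m+1) → F) :
    Tmap (M * N) t = Tmap N (Tmap M t) := by
  funext k
  have hNl : ∀ k : Fin (m+1), N (l3 m) (ι m k) = 0 :=
    fun k => hN.2 _ _ (iota_lt_l3 k)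
  have hM0 : ∀ j : Fin (m+1), M (ι m j) (z3 m) = 0 :=
    fun j => hM.2 _ _ (z3_lt_iota j)
  simp only [Tmap, Matrix.mul_apply]
  rw [sum_split (fun s => M (z3 m) s * N s (ι m k))]
  simp only [hM.1, hNl, one_mul, mul_zero, add_zero]
  have hmid : ∀ j : Fin (m+1),
      ∑ s, M (ι m j) s * N s (ι m k) = ∑ i, M (ι m j) (ι m i) * N (ι m i) (ι m k) := by
    intro j
    rw [sum_split (fun s => M (ι m j) s * N s (ι m k))]
    simp [hM0, hNl]
  simp only [hmid]
  simp only [add_mul, Finset.sum_mul, Finset.mul_sum, mul_assoc, Finset.sum_add_distrib]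
  rw [Finset.sum_comm]
  ring


lemma cval_mul (ψ : Multiplicative F →* ℂˣ) (M N : Matrix (Fin (m+3)) (Fin (m+3)) F)
    (hM : IsUnitriangular M) (hN : IsUnitriangular N) (t : Fin (m+1) → F) :
    cval ψ (M * N) t = cval ψ M t * cval ψ N (Tmap M t) := by
  have hM0 : ∀ j : Fin (m+1), M (ι m j) (z3 m) = 0 :=
    fun j => hM.2 _ _ (z3_lt_iota j)
  rw [cval, cval, cval, ← _root_.map_mul, ← ofAdd_add]
  congr 1
  simp only [Tmap, Matrix.mul_apply]
  rw [sum_split (fun s => M (z3 m) s * N s (l3 m))]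
  have hmid : ∀ j : Fin (m+1),
      ∑ s, M (ι m j) s * N s (l3 m)
        = (∑ i, M (ι m j) (ι m i) * N (ι m i) (l3 m)) + M (ι m j) (l3 m) := by
    intro j
    rw [sum_split (fun s => M (ι m j) s * N s (l3 m))]
    simp [hM0, hN.1]
  simp only [hmid, hM.1, hN.1, one_mul, mul_one]
  simp only [add_mul, mul_add, Finset.sum_mul, Finset.mul_sum, mul_assoc,
    Finset.sum_add_distrib]
  rw [Finset.sum_comm]
  ring

lemma ρmat_mul (ψ : Multiplicative F →* ℂˣ) (M N : Matrix (Fin (m+3)) (Fin (m+3)) F)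
    (hM : IsUnitriangular M) (hN : IsUnitriangular N) :
    ρmat ψ (M * N) = ρmat ψ M * ρmat ψ N := by
  funext t s
  rw [Matrix.mul_apply]
  simp only [ρmat, ite_mul, zero_mul]
  rw [Finset.sum_eq_single (Tmap M t)]
  · simp [Tmap_mul M N hM hN, cval_mul ψ M N hM hN, Units.val_mul]
  · intro b _ hb
    simp [hb]
  · intro h
    exact absurd (Finset.mem_univ _) h

lemma ρmat_one (ψ : Multiplicative F →* ℂˣ) :
    ρmat (m := m) (F := F) ψ 1 = 1 := by
  have h1 : ∀ t : Fin (m+1) → F, Tmap (1 : Matrix (Fin (m+3)) (Fin (m+3)) F) t = t := by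
    intro t; funext k
    simp [Tmap, Matrix.one_apply, (z3_lt_iota k).ne, iota_inj,
      Finset.sum_ite_eq' Finset.univ k (fun j => t j)]
  have h2 : ∀ t : Fin (m+1) → F,
      cval ψ (1 : Matrix (Fin (m+3)) (Fin (m+3)) F) t = 1 := by
    intro t
    have : ∀ j : Fin (m+1), (1 : Matrix (Fin (m+3)) (Fin (m+3)) F) (ι m j) (l3 m) = 0 := by
      intro j; simp [Matrix.one_apply, (iota_lt_l3 j).ne]
    simp [cval, Matrix.one_apply, (z3_lt_l3 (m := m)).ne, this]
  funext t s
  simp only [ρmat, h1, h2, Matrix.one_apply, Units.val_one]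
  rcases eq_or_ne s t with rfl | h
  · simp
  · simp [h, Ne.symm h]


lemma ρmat_central (ψ : Multiplicative F →* ℂˣ) (a : F) :
    ρmat ψ (1 + a • Matrix.single (z3 m) (l3 m) (1 : F)) =
      ((ψ (Multiplicative.ofAdd a) : ℂˣ) : ℂ) • 1 := by
  set C : Matrix (Fin (m+3)) (Fin (m+3)) F :=
    1 + a • Matrix.single (z3 m) (l3 m) (1 : F) with hC
  have e1 : ∀ k : Fin (m+1), C (z3 m) (ι m k) = 0 := by
    intro k
    simp [hC, Matrix.one_apply, Matrix.single, (z3_lt_iota k).ne,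
      (iota_lt_l3 k).ne, (iota_lt_l3 k).ne']
  have e2 : ∀ j k : Fin (m+1), C (ι m j) (ι m k) = if j = k then 1 else 0 := by
    intro j k
    by_cases h : j = k
    · subst h; simp [hC, Matrix.one_apply, Matrix.single, (z3_lt_iota j).ne,
        (z3_lt_iota j).ne']
    · simp [hC, Matrix.one_apply, Matrix.single, h,
        (iota_inj j k).not.mpr h, (z3_lt_iota j).ne, (z3_lt_iota j).ne']
  have e3 : C (z3 m) (l3 m) = a := by
    simp [hC, Matrix.one_apply, Matrix.single, (z3_lt_l3 (m := m)).ne]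
  have e4 : ∀ j : Fin (m+1), C (ι m j) (l3 m) = 0 := by
    intro j
    simp [hC, Matrix.one_apply, Matrix.single, (iota_lt_l3 j).ne,
      (z3_lt_iota j).ne, (z3_lt_iota j).ne']
  have h1 : ∀ t : Fin (m+1) → F, Tmap C t = t := by
    intro t; funext k
    simp [Tmap, e1, e2, Finset.sum_ite_eq' Finset.univ k (fun j => t j)]
  have h2 : ∀ t : Fin (m+1) → F, cval ψ C t = ψ (Multiplicative.ofAdd a) := by
    intro t
    simp [cval, e3, e4]
  funext t s
  simp only [ρmat, h1, h2, Matrix.smul_apply, Matrix.one_apply, smul_eq_mul]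
  rcases eq_or_ne s t with rfl | h
  · simp
  · simp [h, Ne.symm h]

end URepAux

open URepAux

/-- For every nontrivial character `ψ` of the additive group of `F`, there is a complex
representation of `Up_n(F)` of dimension `p ^ (r * (n - 2))` on which each central
element `I + a • E_{1,n}` acts as the scalar `ψ a`. -/
theorem unitriangular_rep_with_central_character (p r n : ℕ) (hp : p.Prime) (hr : 0 < r)
    (hn : 3 ≤ n) (F : Type) [Field F] [Fintype F] (hF : Fintype.card F = p ^ r)
    (U : Subgroup (GL (Fin n) F))
    (hU : ∀ M : GL (Fin n) F, M ∈ U ↔ IsUnitriangular (M : Matrix (Fin n) (Fin n) F))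
    (ψ : Multiplicative F →* ℂˣ) (hψ : ψ ≠ 1) :
    ∃ ρ : ↥U →* GL (Fin (p ^ (r * (n - 2)))) ℂ,
      ∀ (a : F) (M : ↥U),
        ((M : GL (Fin n) F) : Matrix (Fin n) (Fin n) F) =
            1 + a • Matrix.single
              (⟨0, by omega⟩ : Fin n) (⟨n - 1, by omega⟩ : Fin n) (1 : F) →
          ((ρ M : GL (Fin (p ^ (r * (n - 2)))) ℂ) :
              Matrix (Fin (p ^ (r * (n - 2)))) (Fin (p ^ (r * (n - 2)))) ℂ) =
            ((ψ (Multiplicative.ofAdd a) : ℂˣ) : ℂ) • 1 := by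
  classical
  obtain ⟨m, rfl⟩ : ∃ m, n = m + 3 := ⟨n - 3, by omega⟩
  have hcard : Fintype.card (Fin (m+1) → F) = p ^ (r * (m + 3 - 2)) := by
    rw [Fintype.card_fun, hF, ← pow_mul, Fintype.card_fin]
    rfl
  let e : (Fin (m+1) → F) ≃ Fin (p ^ (r * (m + 3 - 2))) :=
    Fintype.equivFinOfCardEq hcard
  have hut : ∀ M : ↥U, IsUnitriangular ((M : GL (Fin (m+3)) F) : Matrix (Fin (m+3)) (Fin (m+3)) F) :=
    fun M => (hU _).mp M.2
  have hutinv : ∀ M : ↥U,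
      IsUnitriangular (((M : GL (Fin (m+3)) F)⁻¹ : GL (Fin (m+3)) F) : Matrix (Fin (m+3)) (Fin (m+3)) F) :=
    fun M => (hU _).mp (U.inv_mem M.2)
  let ρ₀ : ↥U →* (Matrix (Fin (m+1) → F) (Fin (m+1) → F) ℂ)ˣ :=
  { toFun := fun M =>
      { val := ρmat ψ ((M : GL (Fin (m+3)) F) : Matrix _ _ F)
        inv := ρmat ψ (((M : GL (Fin (m+3)) F)⁻¹ : GL (Fin (m+3)) F) : Matrix _ _ F)
        val_inv := by
          rw [← ρmat_mul ψ _ _ (hut M) (hutinv M)]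
          rw [← Units.val_mul, mul_inv_cancel, Units.val_one, ρmat_one]
        inv_val := by
          rw [← ρmat_mul ψ _ _ (hutinv M) (hut M)]
          rw [← Units.val_mul, inv_mul_cancel, Units.val_one, ρmat_one] }
    map_one' := by
      ext : 1
      simp only [Units.val_one]
      exact (congrArg (ρmat ψ) (by simp)).trans (ρmat_one ψ)
    map_mul' := by
      intro M N
      ext : 1
      simp only [Units.val_mul]
      have hMN : (((M * N : ↥U) : GL (Fin (m+3)) F) : Matrix (Fin (m+3)) (Fin (m+3)) F)
          = ((M : GL (Fin (m+3)) F) : Matrix (Fin (m+3)) (Fin (m+3)) F)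
            * ((N : GL (Fin (m+3)) F) : Matrix (Fin (m+3)) (Fin (m+3)) F) := by
        simp
      rw [hMN]
      exact ρmat_mul ψ _ _ (hut M) (hut N) }
  let φ : (Matrix (Fin (m+1) → F) (Fin (m+1) → F) ℂ)ˣ →*
      (Matrix (Fin (p ^ (r * (m + 3 - 2)))) (Fin (p ^ (r * (m + 3 - 2)))) ℂ)ˣ :=
    Units.map ((Matrix.reindexAlgEquiv ℂ ℂ e).toRingEquiv.toMonoidHom)
  refine ⟨φ.comp ρ₀, ?_⟩
  intro a M hM
  have key : ρmat ψ ((M : GL (Fin (m+3)) F) : Matrix (Fin (m+3)) (Fin (m+3)) F)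
      = ((ψ (Multiplicative.ofAdd a) : ℂˣ) : ℂ) • 1 := by
    rw [hM]
    exact ρmat_central ψ a
  have key2 : ((ρ₀ M : (Matrix (Fin (m+1) → F) (Fin (m+1) → F) ℂ)ˣ)
        : Matrix (Fin (m+1) → F) (Fin (m+1) → F) ℂ)
      = ((ψ (Multiplicative.ofAdd a) : ℂˣ) : ℂ) • 1 := key
  have hcoe : (((φ.comp ρ₀) M : GL (Fin (p ^ (r * (m + 3 - 2)))) ℂ)
        : Matrix (Fin (p ^ (r * (m + 3 - 2)))) (Fin (p ^ (r * (m + 3 - 2)))) ℂ)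
      = (Matrix.reindexAlgEquiv ℂ ℂ e)
          ((ρ₀ M : (Matrix (Fin (m+1) → F) (Fin (m+1) → F) ℂ)ˣ)
            : Matrix (Fin (m+1) → F) (Fin (m+1) → F) ℂ) := rfl
  rw [hcoe, key2, _root_.map_smul, _root_.map_one]
end

section
/- Let p be an odd prime, r a positive integer, F a finite field with p^r elements, and n ≥ 1. Let D be a symmetric n×n matrix over F (Dᵀ = D). Then A·D·Aᵀ = D for every A ∈ Up_n(F) if and only if every entry of D except possibly the (1,1) entry is zero, i.e., D = d·E_{1,1} for some d ∈ F. (Equivalently, A·D = D·(A⁻¹)ᵀ for all unitriangular A iff D = d·E_{1,1}.) -/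
open Matrix

/-- For `p` odd and `D` symmetric, `A * D * Aᵀ = D` for all unitriangular `A`
iff `D = d • E_{1,1}` for some `d ∈ F`. -/
theorem symmetric_fixed_by_unitriangular (p r n : ℕ) (hp : p.Prime) (hp2 : p ≠ 2)
    (hr : 0 < r) (hn : 1 ≤ n)
    (F : Type) [Field F] [Fintype F] (hF : Fintype.card F = p ^ r)
    (D : Matrix (Fin n) (Fin n) F) (hD : Dᵀ = D) :
    (∀ A : Matrix (Fin n) (Fin n) F, IsUnitriangular A → A * D * Aᵀ = D) ↔
      ∃ d : F, D = d • Matrix.single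
        (⟨0, by omega⟩ : Fin n) (⟨0, by omega⟩ : Fin n) (1 : F) := by
  set z : Fin n := ⟨0, by omega⟩ with hz
  -- characteristic is p, hence 2 ≠ 0
  have h2 : (2 : F) ≠ 0 := by
    intro h
    have hdvd : ringChar F ∣ 2 := by
      have := (CharP.cast_eq_zero_iff F (ringChar F) 2).mp (by exact_mod_cast h)
      exact this
    obtain ⟨m, hq, hcard⟩ := FiniteField.card F (ringChar F)
    have hq2 : ringChar F = 2 := (Nat.prime_dvd_prime_iff_eq hq Nat.prime_two).mp hdvd
    rw [hq2] at hcard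
    rw [hF] at hcard
    have hpdvd : p ∣ 2 ^ (m : ℕ) := hcard ▸ dvd_pow_self p hr.ne'
    have := (Nat.Prime.dvd_of_dvd_pow hp hpdvd)
    exact hp2 ((Nat.prime_dvd_prime_iff_eq hp Nat.prime_two).mp this)
  constructor
  · intro h
    -- key: for each j ≠ z, use transvection 1 + E_{z,j}
    have key : ∀ j : Fin n, j ≠ z →
        (∀ b : Fin n, b ≠ z → D j b = 0) ∧ (∀ a : Fin n, a ≠ z → D a j = 0) ∧
        D z j = 0 := by
      intro j hj
      set Q : Matrix (Fin n) (Fin n) F := Matrix.single z j 1 with hQ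
      have hlt : ∀ a : Fin n, a ≠ z → z < a := fun a ha => by
        rw [Fin.lt_def]
        exact Nat.pos_of_ne_zero (fun h => ha (Fin.ext h))
      have hzj : z < j := hlt j hj
      have hA : IsUnitriangular (1 + Q) := by
        constructor
        · intro i
          have : Q i i = 0 := by
            simp only [hQ, Matrix.single]
            rw [Matrix.of_apply, if_neg]
            rintro ⟨rfl, rfl⟩; exact hj rfl
          simp [this]
        · intro i j' hj'
          have h1 : (1 : Matrix (Fin n) (Fin n) F) i j' = 0 :=
            Matrix.one_apply_ne (by rintro rfl; exact lt_irrefl _ hj')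
          have h2' : Q i j' = 0 := by
            simp only [hQ, Matrix.single]
            rw [Matrix.of_apply, if_neg]
            rintro ⟨rfl, rfl⟩
            exact absurd hj' (by simp [hz, Fin.lt_def])
          simp [h1, h2']
      have heq := h (1 + Q) hA
      have hQT : Qᵀ = Matrix.single j z 1 := by
        ext a b
        simp [hQ, Matrix.single, Matrix.transpose_apply, and_comm]
      have hexp : Q * D + D * Qᵀ + Q * D * Qᵀ = 0 := by
        have : D + (Q * D + D * Qᵀ + Q * D * Qᵀ) = D := by
          calc D + (Q * D + D * Qᵀ + Q * D * Qᵀ)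
              = (1 + Q) * D * (1 + Q)ᵀ := by
                rw [Matrix.transpose_add, Matrix.transpose_one]
                noncomm_ring
            _ = D := heq
        exact add_left_cancel (by rw [this, add_zero])
      rw [hQT] at hexp
      have hexp' : Q * D + D * Matrix.single j z 1 +
          Q * (D * Matrix.single j z 1) = 0 := by
        rw [← Matrix.mul_assoc]; exact hexp
      -- row j entries
      have row : ∀ b : Fin n, b ≠ z → D j b = 0 := by
        intro b hb
        have := congrFun (congrFun hexp' z) b
        simp only [Matrix.add_apply, Matrix.zero_apply] at this
        simp only [hQ, Matrix.single_mul_apply_same,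
          Matrix.mul_single_apply_of_ne _ _ _ _ _ hb] at this
        simpa using this
      have col : ∀ a : Fin n, a ≠ z → D a j = 0 := by
        intro a ha
        have := congrFun (congrFun hexp' a) z
        simp only [Matrix.add_apply, Matrix.zero_apply] at this
        simp only [hQ, Matrix.single_mul_apply_of_ne _ _ _ _ _ ha,
          Matrix.mul_single_apply_same] at this
        simpa using this
      refine ⟨row, col, ?_⟩
      -- corner entry
      have := congrFun (congrFun hexp' z) z
      simp only [Matrix.add_apply, Matrix.zero_apply] at this
      simp only [hQ, Matrix.single_mul_apply_same,
        Matrix.mul_single_apply_same] at this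
      have hjj : D j j = 0 := col j hj
      have hsym : D j z = D z j := by
        conv_lhs => rw [← hD]
        rfl
      rw [hjj, hsym] at this
      have h2d : (2 : F) * D z j = 0 := by ring_nf; linear_combination this
      rcases mul_eq_zero.mp h2d with h' | h'
      · exact absurd h' h2
      · exact h'
    refine ⟨D z z, ?_⟩
    ext a b
    by_cases hb : b = z
    · subst hb
      by_cases ha : a = z
      · subst ha
        simp [Matrix.single]
      · have : D z a = 0 := ((key a ha).2.2)
        have : D a z = 0 := by
          rw [← hD]; exact this
        rw [this]
        simp only [Matrix.smul_apply, Matrix.single, smul_eq_mul]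
        rw [Matrix.of_apply, if_neg (by rintro ⟨rfl, _⟩; exact ha rfl), mul_zero]
    · have : D a b = 0 := by
        by_cases ha : a = z
        · subst ha; exact (key b hb).2.2
        · exact (key b hb).2.1 a ha
      rw [this]
      simp only [Matrix.smul_apply, Matrix.single, smul_eq_mul]
      rw [Matrix.of_apply, if_neg (by rintro ⟨_, rfl⟩; exact hb rfl), mul_zero]
  · rintro ⟨d, rfl⟩
    intro A hA
    have hAz : ∀ a : Fin n, A a z = if a = z then 1 else 0 := by
      intro a
      by_cases ha : a = z
      · subst ha; simp [hA.1 z]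
      · rw [if_neg ha]
        exact hA.2 a z (by
          rw [Fin.lt_def]
          exact Nat.pos_of_ne_zero (fun h => ha (Fin.ext h)))
    have hAE : A * Matrix.single z z (1 : F) = Matrix.single z z 1 := by
      ext a b
      by_cases hb : b = z
      · subst hb
        rw [Matrix.mul_single_apply_same, hAz a, mul_one]
        simp [Matrix.single, eq_comm]
      · rw [Matrix.mul_single_apply_of_ne _ _ _ _ _ hb]
        simp only [Matrix.single]
        rw [Matrix.of_apply, if_neg (by rintro ⟨_, rfl⟩; exact hb rfl)]
    have hEA : Matrix.single z z (1 : F) * Aᵀ = Matrix.single z z 1 := by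
      ext a b
      by_cases ha : a = z
      · subst ha
        rw [Matrix.single_mul_apply_same, Matrix.transpose_apply, hAz b, one_mul]
        simp [Matrix.single, eq_comm]
      · rw [Matrix.single_mul_apply_of_ne _ _ _ _ _ ha]
        simp only [Matrix.single]
        rw [Matrix.of_apply, if_neg (by rintro ⟨rfl, _⟩; exact ha rfl)]
    calc A * (d • Matrix.single z z (1 : F)) * Aᵀ
        = d • (A * Matrix.single z z (1 : F) * Aᵀ) := by
          rw [Matrix.mul_smul, Matrix.smul_mul]
      _ = d • Matrix.single z z (1 : F) := by rw [hAE, hEA]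
end

section
/- Let r be a positive integer, F a finite field with 2^r elements, and n ≥ 2. Let D be a symmetric n×n matrix over F (Dᵀ = D). Then A·D·Aᵀ = D for every A ∈ Up_n(F) if and only if D_{i,j} = 0 for all (i,j) not in {(1,1),(1,2),(2,1)}, i.e., D = a·E_{1,1} + b·(E_{1,2} + E_{2,1}) for some a, b ∈ F. -/
open Matrix

private lemma mul_std_mul {n : ℕ} {F : Type} [Field F] (A B : Matrix (Fin n) (Fin n) F)
    (k l : Fin n) (c : F) (i j : Fin n) :
    (A * Matrix.single k l c * B) i j = A i k * c * B l j := by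
  simp [Matrix.mul_apply, Matrix.single, ite_and, Finset.mul_sum, mul_ite]

private lemma std_transpose {n : ℕ} {F : Type} [Field F] (p q : Fin n) (c : F) :
    (Matrix.single p q c)ᵀ = Matrix.single q p c := by
  ext i j
  simp [Matrix.single, and_comm]

private lemma std_apply {n : ℕ} {F : Type} [Field F] (k l i j : Fin n) (c : F) :
    Matrix.single k l c i j = if k = i ∧ l = j then c else 0 := rfl

private lemma triple_apply {n : ℕ} {F : Type} [Field F] (D : Matrix (Fin n) (Fin n) F)
    (p q i j : Fin n) :
    ((1 + Matrix.single p q (1:F)) * D * (1 + Matrix.single q p (1:F))) i j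
      = D i j + (if i = p then D q j else 0) + (if j = p then D i q else 0)
        + (if i = p ∧ j = p then D q q else 0) := by
  have e1 : (1 + Matrix.single p q (1:F)) * D * (1 + Matrix.single q p (1:F))
      = D + (1 : Matrix (Fin n) (Fin n) F) * Matrix.single p q (1:F) * D
        + D * Matrix.single q p (1:F) * 1
        + (1 : Matrix (Fin n) (Fin n) F) * Matrix.single p q (1:F)
            * (D * Matrix.single q p (1:F) * 1) := by
    noncomm_ring
  rw [e1]
  simp only [Matrix.add_apply, mul_std_mul]
  by_cases hip : i = p <;> by_cases hjp : j = p
  · simp [Matrix.one_apply, hip, hjp]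
    try ring
  · simp [Matrix.one_apply, hip, hjp, Ne.symm hjp]
    try ring
  · simp [Matrix.one_apply, hip, hjp, Ne.symm hip]
    try ring
  · simp [Matrix.one_apply, hip, hjp, Ne.symm hip, Ne.symm hjp]
    try ring

/-- Over a field with `2 ^ r` elements, for `D` symmetric, `A * D * Aᵀ = D` for all
unitriangular `A` iff `D = a • E_{1,1} + b • (E_{1,2} + E_{2,1})` for some `a b ∈ F`. -/
theorem symmetric_fixed_by_unitriangular_char_two (r n : ℕ) (hr : 0 < r) (hn : 2 ≤ n)
    (F : Type) [Field F] [Fintype F] (hF : Fintype.card F = 2 ^ r)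
    (D : Matrix (Fin n) (Fin n) F) (hD : Dᵀ = D) :
    (∀ A : Matrix (Fin n) (Fin n) F, IsUnitriangular A → A * D * Aᵀ = D) ↔
      ∃ a b : F, D =
        a • Matrix.single (⟨0, by omega⟩ : Fin n) (⟨0, by omega⟩ : Fin n) (1 : F) +
        b • (Matrix.single (⟨0, by omega⟩ : Fin n) (⟨1, by omega⟩ : Fin n) (1 : F) +
             Matrix.single (⟨1, by omega⟩ : Fin n) (⟨0, by omega⟩ : Fin n) (1 : F)) := by
  have h2 : (2:F) = 0 := by
    have hc := FiniteField.cast_card_eq_zero F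
    rw [hF] at hc
    push_cast at hc
    exact pow_eq_zero_iff (by omega) |>.mp hc
  have hadd : ∀ x : F, x + x = 0 := by
    intro x
    have hx : (2:F) * x = 0 := by rw [h2, zero_mul]
    rwa [two_mul] at hx
  set z : Fin n := ⟨0, by omega⟩ with hz
  set o : Fin n := ⟨1, by omega⟩ with ho
  have hzv : (z : ℕ) = 0 := rfl
  have hov : (o : ℕ) = 1 := rfl
  have hzo_ne : z ≠ o := by
    intro h'
    have h'' := congrArg Fin.val h'
    rw [hzv, hov] at h''
    omega
  have hsymm : ∀ i j : Fin n, D j i = D i j := by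
    intro i j
    conv_lhs => rw [← hD]
    rfl
  constructor
  · intro h
    have key : ∀ p q : Fin n, p < q → ∀ i j : Fin n,
        (if i = p then D q j else 0) + (if j = p then D i q else 0)
          + (if i = p ∧ j = p then D q q else 0) = 0 := by
      intro p q hpq i j
      have hpq' : p ≠ q := ne_of_lt hpq
      have hA : IsUnitriangular (1 + Matrix.single p q (1:F)) := by
        constructor
        · intro k
          have hk : Matrix.single p q (1:F) k k = 0 := by
            rw [std_apply, if_neg (fun h' => hpq' (h'.1.trans h'.2.symm))]
          simp [Matrix.add_apply, Matrix.one_apply, hk]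
        · intro a b hba
          have h1 : (1 : Matrix (Fin n) (Fin n) F) a b = 0 :=
            Matrix.one_apply_ne (ne_of_lt hba).symm
          have h2' : Matrix.single p q (1:F) a b = 0 := by
            rw [std_apply]
            apply if_neg
            intro h'
            rw [h'.1, h'.2] at hpq
            exact absurd hpq (not_lt.mpr hba.le)
          simp [Matrix.add_apply, h1, h2']
      have heq := h _ hA
      rw [Matrix.transpose_add, Matrix.transpose_one, std_transpose] at heq
      have hent := congrFun (congrFun heq i) j
      rw [triple_apply] at hent
      linear_combination hent
    have z1 : ∀ p q j : Fin n, p < q → j ≠ p → D q j = 0 := by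
      intro p q j hpq hjp
      have := key p q hpq p j
      simpa [hjp] using this
    have z2 : ∀ p q : Fin n, p < q → D q q = 0 := by
      intro p q hpq
      have hk := key p q hpq p p
      rw [if_pos (rfl : p = p), if_pos (rfl : p = p),
        if_pos (show p = p ∧ p = p from ⟨rfl, rfl⟩)] at hk
      have hs : D p q = D q p := hsymm q p
      linear_combination hk - hs - D q p * h2
    have rowcase : ∀ i j : Fin n, (j:ℕ) < (i:ℕ) → ¬(i = o ∧ j = z) → D i j = 0 := by
      intro i j hji hne
      by_cases hj0 : (j:ℕ) = 0
      · have hjz : j = z := Fin.ext (hj0.trans hzv.symm)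
        have hi1 : (i:ℕ) ≠ 1 := fun h' => hne ⟨Fin.ext (h'.trans hov.symm), hjz⟩
        refine z1 o i j ?_ ?_
        · rw [Fin.lt_def, hov]; omega
        · intro h'
          rw [h', hov] at hj0
          omega
      · refine z1 z i j ?_ ?_
        · rw [Fin.lt_def, hzv]; omega
        · intro h'
          rw [h', hzv] at hj0
          omega
    have supp : ∀ i j : Fin n, ¬(i = z ∧ j = z) → ¬(i = z ∧ j = o) → ¬(i = o ∧ j = z) →
        D i j = 0 := by
      intro i j h1 h2' h3
      rcases lt_trichotomy (j:ℕ) (i:ℕ) with hlt | heq | hgt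
      · exact rowcase i j hlt h3
      · have hij : j = i := Fin.ext heq
        subst hij
        by_cases hj0 : (j:ℕ) = 0
        · exact absurd ⟨Fin.ext (hj0.trans hzv.symm), Fin.ext (hj0.trans hzv.symm)⟩ h1
        · exact z2 z j (by rw [Fin.lt_def, hzv]; omega)
      · rw [← hsymm]
        exact rowcase j i hgt (fun h' => h2' ⟨h'.2, h'.1⟩)
    refine ⟨D z z, D z o, ?_⟩
    ext i j
    simp only [Matrix.add_apply, Matrix.smul_apply, smul_eq_mul, std_apply]
    by_cases hi1 : i = z ∧ j = z
    · obtain ⟨rfl, rfl⟩ := hi1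
      simp [Ne.symm hzo_ne]
    by_cases hi2 : i = z ∧ j = o
    · obtain ⟨rfl, rfl⟩ := hi2
      simp [hzo_ne, Ne.symm hzo_ne]
    by_cases hi3 : i = o ∧ j = z
    · obtain ⟨rfl, rfl⟩ := hi3
      simp [hzo_ne, Ne.symm hzo_ne, hsymm z o]
    · have h1' : ¬(z = i ∧ z = j) := fun h' => hi1 ⟨h'.1.symm, h'.2.symm⟩
      have h2'' : ¬(z = i ∧ o = j) := fun h' => hi2 ⟨h'.1.symm, h'.2.symm⟩
      have h3' : ¬(o = i ∧ z = j) := fun h' => hi3 ⟨h'.1.symm, h'.2.symm⟩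
      rw [if_neg h1', if_neg h2'', if_neg h3', supp i j hi1 hi2 hi3]
      ring
  · rintro ⟨a, b, rfl⟩ A ⟨hdiag, hlow⟩
    have hcol0 : ∀ i : Fin n, A i z = if i = z then 1 else 0 := by
      intro i
      by_cases hiz : i = z
      · rw [if_pos hiz, hiz, hdiag]
      · rw [if_neg hiz]
        apply hlow
        rw [Fin.lt_def, hzv]
        exact Nat.pos_of_ne_zero (fun h' => hiz (Fin.ext (h'.trans hzv.symm)))
    ext i j
    have expand :
        (A * (a • Matrix.single z z (1:F) + b • (Matrix.single z o (1:F)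
          + Matrix.single o z (1:F))) * Aᵀ) i j
        = a * (A i z * A j z) + b * (A i z * A j o + A i o * A j z) := by
      simp only [Matrix.mul_add, Matrix.add_mul, Matrix.mul_smul, Matrix.smul_mul,
        Matrix.add_apply, Matrix.smul_apply, smul_eq_mul, mul_std_mul,
        Matrix.transpose_apply]
      ring
    rw [expand]
    simp only [Matrix.add_apply, Matrix.smul_apply, smul_eq_mul, std_apply]
    rw [hcol0 i, hcol0 j]
    by_cases hiz : i = z <;> by_cases hjz : j = z
    · subst hiz; subst hjz
      simp [Ne.symm hzo_ne, hadd]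
    · subst hiz
      by_cases hjo : j = o
      · subst hjo
        simp [hjz, Ne.symm hjz, Ne.symm hzo_ne, hdiag]
      · have hAjo : A j o = 0 := by
          apply hlow
          rw [Fin.lt_def, hov]
          have hj0 : (j:ℕ) ≠ 0 := fun h' => hjz (Fin.ext (h'.trans hzv.symm))
          have hj1 : (j:ℕ) ≠ 1 := fun h' => hjo (Fin.ext (h'.trans hov.symm))
          omega
        simp [hjz, Ne.symm hjz, hjo, Ne.symm hjo, Ne.symm hzo_ne, hAjo]
    · subst hjz
      by_cases hio : i = o
      · subst hio
        simp [hiz, Ne.symm hiz, hzo_ne, Ne.symm hzo_ne, hdiag]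
      · have hAio : A i o = 0 := by
          apply hlow
          rw [Fin.lt_def, hov]
          have hi0 : (i:ℕ) ≠ 0 := fun h' => hiz (Fin.ext (h'.trans hzv.symm))
          have hi1 : (i:ℕ) ≠ 1 := fun h' => hio (Fin.ext (h'.trans hov.symm))
          omega
        simp [hiz, Ne.symm hiz, hio, Ne.symm hio, Ne.symm hzo_ne, hAio]
    · simp [hiz, Ne.symm hiz, hjz, Ne.symm hjz]
end

section
/- Let p be a prime, r a positive integer, F a finite field with p^r elements, and n ≥ 1. Let S be the 2n×2n block matrix [[0, I_n],[−I_n, 0]] and Sp(2n,F) = {M ∈ GL_{2n}(F) : Mᵀ S M = S}. Then the set P(n,F) of block matrices [[A, A·B],[0, (Aᵀ)⁻¹]] with A ∈ Up_n(F) and B a symmetric n×n matrix over F is a subgroup of Sp(2n,F), and it is a Sylow p-subgroup of Sp(2n,F). -/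
open Matrix

open Matrix

namespace SympSyl

section Triangular

variable {ι : Type} [Fintype ι] [DecidableEq ι] {R : Type} [CommRing R]
variable {b : ι → ℕ} {M N : Matrix ι ι R}

set_option linter.unusedSectionVars false

/-- strictly triangular wrt `b` -/
def SUT (M : Matrix ι ι R) (b : ι → ℕ) : Prop := ∀ t s, b s ≤ b t → M t s = 0

theorem SUT.pow (hM : SUT M b) :
    ∀ (k : ℕ) (t s : ι), b s < b t + k → (M ^ k) t s = 0 := by
  intro k
  induction k with
  | zero =>
    intro t s h
    rw [pow_zero, Matrix.one_apply_ne (by rintro rfl; omega)]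
  | succ k ih =>
    intro t s h
    rw [pow_succ', Matrix.mul_apply]
    apply Finset.sum_eq_zero
    intro u _
    by_cases hu : b t < b u
    · rw [ih u s (by omega), mul_zero]
    · rw [hM t u (by omega), zero_mul]

theorem SUT.nilpotent (hM : SUT M b) (c : ℕ) (hc : ∀ s, b s < c) : M ^ c = 0 := by
  ext t s
  rw [hM.pow c t s (by have := hc s; omega)]
  rfl

theorem tri_diag_mul (hb : Function.Injective b) (hM : M.BlockTriangular b)
    (hN : N.BlockTriangular b) (t : ι) : (M * N) t t = M t t * N t t := by
  rw [Matrix.mul_apply, Finset.sum_eq_single t]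
  · intro u _ hu
    rcases (hb.ne_iff.mpr hu).lt_or_gt with h | h
    · rw [hM h, zero_mul]
    · rw [hN h, mul_zero]
  · intro h; exact absurd (Finset.mem_univ t) h

theorem tri_pow (hM : M.BlockTriangular b) (k : ℕ) : (M ^ k).BlockTriangular b := by
  induction k with
  | zero => rw [pow_zero]; exact blockTriangular_one
  | succ k ih => rw [pow_succ]; exact ih.mul hM

theorem tri_diag_pow (hb : Function.Injective b) (hM : M.BlockTriangular b) (k : ℕ) (t : ι) :
    (M ^ k) t t = (M t t) ^ k := by
  induction k with
  | zero => rw [pow_zero, pow_zero, Matrix.one_apply_eq]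
  | succ k ih => rw [pow_succ, pow_succ, tri_diag_mul hb (tri_pow hM k) hM, ih]

/-- unitriangular wrt `b` -/
def UT (M : Matrix ι ι R) (b : ι → ℕ) : Prop :=
  M.BlockTriangular b ∧ ∀ t, M t t = 1

theorem UT.sub_one (hb : Function.Injective b) (hM : UT M b) : SUT (M - 1) b := by
  intro t s h
  rcases eq_or_ne t s with rfl | hne
  · simp [hM.2]
  · have hlt : b s < b t := lt_of_le_of_ne h (fun hh => hne (hb hh.symm))
    simp [Matrix.sub_apply, hM.1 hlt, Matrix.one_apply_ne hne]

theorem UT.one : UT (1 : Matrix ι ι R) b := ⟨blockTriangular_one, fun t => Matrix.one_apply_eq t⟩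

theorem UT.mul (hb : Function.Injective b) (hM : UT M b) (hN : UT N b) : UT (M * N) b :=
  ⟨hM.1.mul hN.1, fun t => by rw [tri_diag_mul hb hM.1 hN.1, hM.2, hN.2, one_mul]⟩

theorem UT.exists_inv (hb : Function.Injective b) (hM : UT M b) (c : ℕ) (hc : ∀ s, b s < c) :
    ∃ V, UT V b ∧ M * V = 1 ∧ V * M = 1 := by
  set N := M - 1 with hN
  have hNs : SUT N b := hM.sub_one hb
  have hNneg : SUT (-N) b := fun t s h => by rw [Matrix.neg_apply, hNs t s h, neg_zero]
  have hNc : (-N) ^ c = 0 := hNneg.nilpotent c hc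
  refine ⟨∑ k ∈ Finset.range c, (-N) ^ k, ⟨⟨?_, ?_⟩, ?_, ?_⟩⟩
  · intro t s h
    rw [Matrix.sum_apply]
    apply Finset.sum_eq_zero
    intro k _
    exact hNneg.pow k t s (by omega)
  · intro t
    rw [Matrix.sum_apply]
    have hc0 : 0 ∈ Finset.range c := Finset.mem_range.mpr (by have := hc t; omega)
    rw [Finset.sum_eq_single 0]
    · rw [pow_zero, Matrix.one_apply_eq]
    · intro k _ hk
      exact hNneg.pow k t t (by omega)
    · intro h; exact absurd hc0 h
  · have hgeo := mul_geom_sum (-N) c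
    rw [hNc, zero_sub] at hgeo
    have : M = -(-N - 1) := by rw [hN]; abel
    rw [this, neg_mul, hgeo, neg_neg]
  · have hgeo := geom_sum_mul (-N) c
    rw [hNc, zero_sub] at hgeo
    have : M = -(-N - 1) := by rw [hN]; abel
    rw [this, mul_neg, hgeo, neg_neg]

end Triangular

end SympSyl
section Unitri

variable {m : ℕ} {F : Type} [Field F]

theorem isUnitriangular_iff_UT {A : Matrix (Fin m) (Fin m) F} :
    IsUnitriangular A ↔ SympSyl.UT A (fun i : Fin m => (i : ℕ)) := by
  constructor
  · intro h
    exact ⟨fun i j hij => h.2 i j (Fin.lt_def.mpr hij), h.1⟩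
  · intro h
    exact ⟨h.2, fun i j hij => h.1 (Fin.lt_def.mp hij)⟩

theorem unitri_one : IsUnitriangular (1 : Matrix (Fin m) (Fin m) F) :=
  isUnitriangular_iff_UT.mpr SympSyl.UT.one

theorem unitri_mul {A B : Matrix (Fin m) (Fin m) F} (hA : IsUnitriangular A)
    (hB : IsUnitriangular B) : IsUnitriangular (A * B) :=
  isUnitriangular_iff_UT.mpr (SympSyl.UT.mul Fin.val_injective
    (isUnitriangular_iff_UT.mp hA) (isUnitriangular_iff_UT.mp hB))

theorem unitri_det {A : Matrix (Fin m) (Fin m) F} (hA : IsUnitriangular A) : A.det = 1 := by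
  rw [Matrix.det_of_upperTriangular (fun i j (hij : (j : Fin m) < i) => hA.2 i j hij)]
  simp [hA.1]

theorem unitri_isUnit_det {A : Matrix (Fin m) (Fin m) F} (hA : IsUnitriangular A) :
    IsUnit A.det := by rw [unitri_det hA]; exact isUnit_one

theorem unitri_inv_s9 {A : Matrix (Fin m) (Fin m) F} (hA : IsUnitriangular A) :
    IsUnitriangular A⁻¹ ∧ A * A⁻¹ = 1 ∧ A⁻¹ * A = 1 := by
  obtain ⟨V, hV, h1, h2⟩ := SympSyl.UT.exists_inv Fin.val_injective
    (isUnitriangular_iff_UT.mp hA) m (fun s => s.is_lt)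
  have : A⁻¹ = V := Matrix.inv_eq_right_inv h1
  rw [this]
  exact ⟨isUnitriangular_iff_UT.mpr hV, h1, h2⟩

end Unitri

namespace SympSyl

/-- ordering of the basis adapted to the flag. -/
def ord (n : ℕ) : Fin n ⊕ Fin n → ℕ := Sum.elim (fun i => (i : ℕ)) (fun j => 2 * n - 1 - (j : ℕ))

theorem ord_inj {n : ℕ} : Function.Injective (ord n) := by
  rintro (i | i) (j | j) h <;> simp only [ord, Sum.elim_inl, Sum.elim_inr] at h
  · exact congrArg Sum.inl (Fin.ext h)
  · exact absurd h (by have := i.is_lt; have := j.is_lt; omega)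
  · exact absurd h (by have := i.is_lt; have := j.is_lt; omega)
  · exact congrArg Sum.inr (Fin.ext (by have := i.is_lt; have := j.is_lt; omega))

theorem ord_lt {n : ℕ} (t : Fin n ⊕ Fin n) : ord n t < 2 * n := by
  rcases t with i | i <;> simp only [ord, Sum.elim_inl, Sum.elim_inr] <;>
    have := i.is_lt <;> omega

variable {n : ℕ} {F : Type} [Field F]

/-- the defining predicate for the Sylow subgroup, at the matrix level -/
def Pp (m : Matrix (Fin n ⊕ Fin n) (Fin n ⊕ Fin n) F) : Prop :=
  ∃ A B : Matrix (Fin n) (Fin n) F, IsUnitriangular A ∧ Bᵀ = B ∧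
    m = Matrix.fromBlocks A (A * B) 0 (Aᵀ)⁻¹

theorem Pp_one : Pp (1 : Matrix (Fin n ⊕ Fin n) (Fin n ⊕ Fin n) F) :=
  ⟨1, 0, unitri_one, by simp, by simp [Matrix.fromBlocks_one]⟩

theorem Pp_UT {m : Matrix (Fin n ⊕ Fin n) (Fin n ⊕ Fin n) F} (hm : Pp m) : UT m (ord n) := by
  obtain ⟨A, B, hA, hB, rfl⟩ := hm
  obtain ⟨hAi, -, -⟩ := unitri_inv_s9 hA
  have hAT : (Aᵀ)⁻¹ = (A⁻¹)ᵀ := (Matrix.transpose_nonsing_inv A).symm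
  constructor
  · rintro (ti | ti) (si | si) hlt <;>
      simp only [ord, Sum.elim_inl, Sum.elim_inr] at hlt
    · exact hA.2 ti si (Fin.lt_def.mpr hlt)
    · exact absurd hlt (by have := ti.is_lt; have := si.is_lt; omega)
    · rfl
    · show ((Aᵀ)⁻¹) ti si = 0
      rw [hAT, Matrix.transpose_apply]
      exact hAi.2 si ti (Fin.lt_def.mpr (by have := ti.is_lt; have := si.is_lt; omega))
  · rintro (ti | ti)
    · exact hA.1 ti
    · show ((Aᵀ)⁻¹) ti ti = 1
      rw [hAT, Matrix.transpose_apply]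
      exact hAi.1 ti

theorem Pp_symp {m : Matrix (Fin n ⊕ Fin n) (Fin n ⊕ Fin n) F} (hm : Pp m) :
    mᵀ * Matrix.fromBlocks (0 : Matrix (Fin n) (Fin n) F) 1 (-1) 0 * m =
      Matrix.fromBlocks (0 : Matrix (Fin n) (Fin n) F) 1 (-1) 0 := by
  obtain ⟨A, B, hA, hB, rfl⟩ := hm
  have hu : IsUnit A.det := unitri_isUnit_det hA
  have huT : IsUnit Aᵀ.det := by rwa [Matrix.det_transpose]
  have hAT : ((Aᵀ)⁻¹)ᵀ = A⁻¹ := by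
    rw [← Matrix.transpose_nonsing_inv, Matrix.transpose_transpose]
  rw [Matrix.fromBlocks_transpose, Matrix.fromBlocks_multiply, Matrix.fromBlocks_multiply]
  refine Matrix.fromBlocks_inj.mpr ⟨?_, ?_, ?_, ?_⟩
  · simp
  · simp [Matrix.mul_nonsing_inv _ huT]
  · simp [hAT, Matrix.nonsing_inv_mul _ hu]
  · simp only [Matrix.transpose_mul, Matrix.mul_zero, zero_add, add_zero,
      Matrix.mul_one, Matrix.mul_neg, Matrix.neg_mul, hAT]
    rw [Matrix.mul_assoc Bᵀ, Matrix.mul_nonsing_inv _ huT, Matrix.mul_one,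
      ← Matrix.mul_assoc, Matrix.nonsing_inv_mul _ hu, Matrix.one_mul, hB, neg_add_cancel]

end SympSyl
namespace SympSyl

variable {n : ℕ} {F : Type} [Field F]

theorem transpose_std (i j : Fin n) :
    (Matrix.single i j (1 : F))ᵀ = Matrix.single j i 1 := by
  ext a b
  simp only [Matrix.transpose_apply, Matrix.single, Matrix.of_apply]
  exact if_congr and_comm rfl rfl

theorem unitri_one_add_std {i j : Fin n} (hij : i < j) :
    IsUnitriangular (1 + Matrix.single i j (1 : F)) := by
  constructor
  · intro l
    rw [Matrix.add_apply, Matrix.one_apply_eq, Matrix.single_apply_of_ne, add_zero]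
    rintro ⟨rfl, rfl⟩
    exact absurd hij (lt_irrefl _)
  · intro a b hba
    rw [Matrix.add_apply, Matrix.one_apply_ne hba.ne', Matrix.single_apply_of_ne,
      add_zero]
    rintro ⟨rfl, rfl⟩
    exact absurd (hij.trans hba) (lt_irrefl _)

theorem inv_one_add_std {i j : Fin n} (hij : i ≠ j) :
    (1 + Matrix.single i j (1 : F))⁻¹ = 1 - Matrix.single i j 1 := by
  apply Matrix.inv_eq_right_inv
  have hEE : Matrix.single i j (1 : F) * Matrix.single i j 1 = 0 :=
    Matrix.single_mul_single_of_ne (h := hij.symm) ..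
  rw [Matrix.add_mul, Matrix.one_mul, Matrix.mul_sub, Matrix.mul_one, hEE, sub_zero]
  abel

theorem Pp_MB {B : Matrix (Fin n) (Fin n) F} (hB : Bᵀ = B) :
    Pp (Matrix.fromBlocks 1 B 0 1) :=
  ⟨1, B, unitri_one, hB, by rw [Matrix.one_mul, Matrix.transpose_one, inv_one]⟩

theorem Pp_MA {A : Matrix (Fin n) (Fin n) F} (hA : IsUnitriangular A) :
    Pp (Matrix.fromBlocks A 0 0 (Aᵀ)⁻¹) :=
  ⟨A, 0, hA, by rw [Matrix.transpose_zero], by rw [Matrix.mul_zero]⟩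

/-- membership in the flag subspace of index `k` -/
def Wmem (k : ℕ) (v : Fin n ⊕ Fin n → F) : Prop := ∀ t, k ≤ ord n t → v t = 0

theorem stab {M : Matrix (Fin n ⊕ Fin n) (Fin n ⊕ Fin n) F} {k : ℕ}
    {v : Fin n ⊕ Fin n → F} (hM : UT M (ord n)) (hv : Wmem (k + 1) v) :
    Wmem k (M *ᵥ v - v) := by
  have hs : SUT (M - 1) (ord n) := hM.sub_one ord_inj
  intro t ht
  have e : M *ᵥ v - v = (M - 1) *ᵥ v := by rw [Matrix.sub_mulVec, Matrix.one_mulVec]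
  rw [e]
  show Finset.univ.sum (fun s => (M - 1) t s * v s) = 0
  apply Finset.sum_eq_zero
  intro s _
  by_cases hst : ord n s ≤ ord n t
  · rw [hs t s hst, zero_mul]
  · rw [hv s (by omega), mul_zero]

theorem FL {k : ℕ} {v : Fin n ⊕ Fin n → F}
    (H : ∀ m_ : Matrix (Fin n ⊕ Fin n) (Fin n ⊕ Fin n) F, Pp m_ → Wmem k (m_ *ᵥ v - v)) :
    Wmem (k + 1) v := by
  rintro (j | j) hord
  · -- `inl` case
    simp only [ord, Sum.elim_inl] at hord
    have hkn : k < n := by have := j.is_lt; omega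
    have hij : (⟨k, hkn⟩ : Fin n) < j := by
      rw [Fin.lt_def]; exact (by omega : k < (j : ℕ))
    have h := H _ (Pp_MA (unitri_one_add_std (F := F) hij)) (Sum.inl ⟨k, hkn⟩) (le_refl k)
    rw [Pi.sub_apply, Matrix.fromBlocks_mulVec] at h
    simp only [Sum.elim_inl, Matrix.zero_mulVec, add_zero, Matrix.add_mulVec,
      Matrix.one_mulVec, Matrix.single_mulVec, one_mul, Pi.add_apply,
      Function.update_self, Function.comp_apply] at h
    linear_combination h
  · -- `inr` case
    simp only [ord, Sum.elim_inr] at hord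
    by_cases hk : k < n
    · by_cases hjk : (j : ℕ) = k
      · have h := H _ (Pp_MB (transpose_std j j)) (Sum.inl j) (le_of_eq hjk.symm)
        rw [Pi.sub_apply, Matrix.fromBlocks_mulVec] at h
        simp only [Sum.elim_inl, Matrix.zero_mulVec, add_zero, Matrix.add_mulVec,
          Matrix.one_mulVec, Matrix.single_mulVec, one_mul, Pi.add_apply,
          Function.update_self, Function.comp_apply] at h
        linear_combination h
      · have hκj : (⟨k, hk⟩ : Fin n) ≠ j := by
          intro hh
          exact hjk (by rw [← hh])
        have hBt : (Matrix.single (⟨k, hk⟩ : Fin n) j 1 +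
              Matrix.single j (⟨k, hk⟩ : Fin n) (1 : F))ᵀ =
            Matrix.single (⟨k, hk⟩ : Fin n) j 1 +
              Matrix.single j (⟨k, hk⟩ : Fin n) (1 : F) := by
          rw [Matrix.transpose_add, transpose_std, transpose_std, add_comm]
        have h := H _ (Pp_MB hBt) (Sum.inl ⟨k, hk⟩) (le_refl k)
        rw [Pi.sub_apply, Matrix.fromBlocks_mulVec] at h
        simp only [Sum.elim_inl, Matrix.zero_mulVec, add_zero, Matrix.add_mulVec,
          Matrix.one_mulVec, Matrix.single_mulVec, one_mul, Pi.add_apply,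
          Function.update_self, Function.comp_apply] at h
        rw [Function.update_of_ne hκj _ _] at h
        simp only [Pi.zero_apply, add_zero] at h
        linear_combination h
    · push_neg at hk
      have hj1 : (j : ℕ) + 1 < n := by have := j.is_lt; omega
      have hjj' : j < (⟨(j : ℕ) + 1, hj1⟩ : Fin n) := by
        rw [Fin.lt_def]; exact (by omega : (j : ℕ) < (j : ℕ) + 1)
      have hA := unitri_one_add_std (F := F) hjj'
      have hATinv : ((1 + Matrix.single j (⟨(j : ℕ) + 1, hj1⟩ : Fin n) (1 : F))ᵀ)⁻¹ =
          1 - Matrix.single (⟨(j : ℕ) + 1, hj1⟩ : Fin n) j 1 := by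
        rw [Matrix.transpose_add, Matrix.transpose_one, transpose_std,
          inv_one_add_std hjj'.ne']
      have h := H _ (Pp_MA hA) (Sum.inr ⟨(j : ℕ) + 1, hj1⟩)
        (show k ≤ 2 * n - 1 - ((j : ℕ) + 1) by omega)
      rw [Pi.sub_apply, Matrix.fromBlocks_mulVec, hATinv] at h
      simp only [Sum.elim_inr, Matrix.zero_mulVec, zero_add, Matrix.sub_mulVec,
        Matrix.one_mulVec, Matrix.single_mulVec, one_mul, Pi.sub_apply,
        Function.update_self, Function.comp_apply] at h
      linear_combination -h

end SympSyl
namespace SympSyl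

variable {n : ℕ} {F : Type} [Field F]

theorem flag_inv {g gi : Matrix (Fin n ⊕ Fin n) (Fin n ⊕ Fin n) F} (hg : g * gi = 1)
    (hconj : ∀ m_ : Matrix (Fin n ⊕ Fin n) (Fin n ⊕ Fin n) F, Pp m_ → Pp (gi * m_ * g)) :
    ∀ (k : ℕ) (v : Fin n ⊕ Fin n → F), Wmem k v → Wmem k (g *ᵥ v) := by
  intro k
  induction k with
  | zero =>
    intro v hv t _
    have hv0 : v = 0 := funext fun u => hv u (Nat.zero_le _)
    rw [hv0, Matrix.mulVec_zero]
    rfl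
  | succ k ih =>
    intro v hv
    apply FL
    intro m_ hm
    have hgm : g * (gi * m_ * g) = m_ * g := by
      rw [← Matrix.mul_assoc, ← Matrix.mul_assoc, hg, Matrix.one_mul]
    have e : m_ *ᵥ (g *ᵥ v) - g *ᵥ v = g *ᵥ ((gi * m_ * g) *ᵥ v - v) := by
      rw [Matrix.mulVec_sub, Matrix.mulVec_mulVec, Matrix.mulVec_mulVec, hgm]
    rw [e]
    exact ih _ (stab (Pp_UT (hconj m_ hm)) hv)

theorem g_tri {g gi : Matrix (Fin n ⊕ Fin n) (Fin n ⊕ Fin n) F} (hg : g * gi = 1)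
    (hconj : ∀ m_ : Matrix (Fin n ⊕ Fin n) (Fin n ⊕ Fin n) F, Pp m_ → Pp (gi * m_ * g)) :
    g.BlockTriangular (ord n) := by
  intro t s hlt
  have hbase : Wmem (ord n s + 1) (Pi.single s (1 : F)) := by
    intro u hu
    exact Pi.single_eq_of_ne (fun hh => by rw [hh] at hu; omega) 1
  have h := flag_inv hg hconj _ _ hbase t (by omega)
  simpa using h

theorem Pp_of_triangular {g : Matrix (Fin n ⊕ Fin n) (Fin n ⊕ Fin n) F}
    (hs : gᵀ * Matrix.fromBlocks (0 : Matrix (Fin n) (Fin n) F) 1 (-1) 0 * g =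
      Matrix.fromBlocks (0 : Matrix (Fin n) (Fin n) F) 1 (-1) 0)
    (htri : g.BlockTriangular (ord n))
    (hdiag : ∀ i : Fin n, g (Sum.inl i) (Sum.inl i) = 1) : Pp g := by
  set a := g.toBlocks₁₁ with ha
  set b := g.toBlocks₁₂ with hb
  set d := g.toBlocks₂₂ with hd
  have hc : g.toBlocks₂₁ = 0 := by
    ext i j
    exact htri (show ord n (Sum.inl j) < ord n (Sum.inr i) by
      simp only [ord, Sum.elim_inl, Sum.elim_inr]
      have := i.is_lt; have := j.is_lt; omega)
  have hg : g = Matrix.fromBlocks a b 0 d := by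
    rw [ha, hb, hd, ← hc, Matrix.fromBlocks_toBlocks]
  have hA : IsUnitriangular a := by
    constructor
    · exact hdiag
    · intro i j hij
      exact htri (show ord n (Sum.inl j) < ord n (Sum.inl i) from Fin.lt_def.mp hij)
  have hu : IsUnit a.det := unitri_isUnit_det hA
  -- block equations from the symplectic relation
  rw [hg, Matrix.fromBlocks_transpose, Matrix.fromBlocks_multiply, Matrix.fromBlocks_multiply]
    at hs
  simp only [Matrix.transpose_zero, Matrix.mul_zero, Matrix.zero_mul, Matrix.mul_one,
    Matrix.mul_neg, Matrix.neg_mul, zero_add, add_zero,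
    Matrix.one_mul] at hs
  have e2 : aᵀ * d = 1 := by
    have := congrArg Matrix.toBlocks₁₂ hs
    simpa [Matrix.toBlocks_fromBlocks₁₂] using this
  have e4 : bᵀ * d = dᵀ * b := by
    have := congrArg Matrix.toBlocks₂₂ hs
    simp only [Matrix.toBlocks_fromBlocks₂₂] at this
    rw [neg_add_eq_sub, sub_eq_zero] at this
    exact this
  have hdinv : (aᵀ)⁻¹ = d := Matrix.inv_eq_right_inv e2
  have hdT : dᵀ = a⁻¹ := by
    rw [← hdinv, ← Matrix.transpose_nonsing_inv, Matrix.transpose_transpose]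
  refine ⟨a, a⁻¹ * b, hA, ?_, ?_⟩
  · rw [Matrix.transpose_mul, Matrix.transpose_nonsing_inv, hdinv, e4, hdT]
  · rw [hg, ← Matrix.mul_assoc, Matrix.mul_nonsing_inv _ hu, Matrix.one_mul, hdinv]

end SympSyl
namespace SympSyl

variable {n : ℕ} {F : Type} [Field F] {p r : ℕ}

theorem charP_of_card [Fintype F] (hp : p.Prime) (hF : Fintype.card F = p ^ r) : CharP F p := by
  have hc : CharP F (ringChar F) := ringChar.charP F
  have hprime : (ringChar F).Prime := CharP.char_is_prime F (ringChar F)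
  have hdvd : ringChar F ∣ p ^ r := by
    apply (CharP.cast_eq_zero_iff F (ringChar F) (p ^ r)).mp
    rw [← hF]
    exact Nat.cast_card_eq_zero F
  have heq : ringChar F = p :=
    (Nat.prime_dvd_prime_iff_eq hprime hp).mp (hprime.dvd_of_dvd_pow hdvd)
  rwa [heq] at hc

theorem eq_one_of_pow_p [CharP F p] (hp : p.Prime) {x : F} {K : ℕ}
    (hx : x ^ p ^ K = 1) : x = 1 := by
  haveI : Fact p.Prime := ⟨hp⟩
  have h0 : (x - 1) ^ p ^ K = 0 := by
    rw [sub_pow_char_pow, hx, one_pow, sub_self]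
  have h1 : x - 1 = 0 := by
    have hne : p ^ K ≠ 0 := pow_ne_zero _ hp.pos.ne'
    exact pow_eq_zero_iff hne |>.mp h0
  have := sub_eq_zero.mp h1
  exact this

theorem Pp_pow_eq_one [CharP F p] (hp : p.Prime) (hn : 1 ≤ n)
    {m : Matrix (Fin n ⊕ Fin n) (Fin n ⊕ Fin n) F} (hm : Pp m) :
    m ^ p ^ (2 * n) = 1 := by
  haveI : Nonempty (Fin n ⊕ Fin n) := ⟨Sum.inl ⟨0, hn⟩⟩
  haveI : Fact p.Prime := ⟨hp⟩
  have hS : SUT (m - 1) (ord n) := (Pp_UT hm).sub_one ord_inj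
  have hnil : (m - 1) ^ (2 * n) = 0 := hS.nilpotent _ ord_lt
  have hle : 2 * n ≤ p ^ (2 * n) := (Nat.lt_pow_self hp.one_lt).le
  have hzero : (m - 1) ^ p ^ (2 * n) = 0 := by
    rw [← Nat.add_sub_cancel' hle, pow_add, hnil, zero_mul]
  have key : m = 1 + (m - 1) := by abel
  calc m ^ p ^ (2 * n) = (1 + (m - 1)) ^ p ^ (2 * n) := by rw [← key]
    _ = 1 ^ p ^ (2 * n) + (m - 1) ^ p ^ (2 * n) :=
        add_pow_char_pow_of_commute _ _ (Commute.one_left _)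
    _ = 1 := by rw [one_pow, hzero, add_zero]

theorem Pp_exists_inv {m : Matrix (Fin n ⊕ Fin n) (Fin n ⊕ Fin n) F} (hm : Pp m) :
    ∃ mi, m * mi = 1 ∧ mi * m = 1 := by
  obtain ⟨V, -, h1, h2⟩ := (Pp_UT hm).exists_inv ord_inj (2 * n) ord_lt
  exact ⟨V, h1, h2⟩

theorem diag_one_of_pow {g : Matrix (Fin n ⊕ Fin n) (Fin n ⊕ Fin n) F} [CharP F p]
    (hp : p.Prime) (htri : g.BlockTriangular (ord n)) {K : ℕ} (hgp : g ^ p ^ K = 1)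
    (t : Fin n ⊕ Fin n) : g t t = 1 := by
  apply eq_one_of_pow_p hp (K := K)
  rw [← tri_diag_pow ord_inj htri, hgp, Matrix.one_apply_eq]

end SympSyl
namespace SympSyl

variable {n : ℕ} {F : Type} [Field F]

theorem Pp_mul {m₁ m₂ : Matrix (Fin n ⊕ Fin n) (Fin n ⊕ Fin n) F}
    (h₁ : Pp m₁) (h₂ : Pp m₂) : Pp (m₁ * m₂) := by
  have hU := UT.mul ord_inj (Pp_UT h₁) (Pp_UT h₂)
  apply Pp_of_triangular
  · have e : (m₁ * m₂)ᵀ * Matrix.fromBlocks (0 : Matrix (Fin n) (Fin n) F) 1 (-1) 0 *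
        (m₁ * m₂) =
        m₂ᵀ * ((m₁ᵀ * Matrix.fromBlocks (0 : Matrix (Fin n) (Fin n) F) 1 (-1) 0 * m₁) * m₂) := by
      rw [Matrix.transpose_mul]
      simp only [Matrix.mul_assoc]
    rw [e, Pp_symp h₁, ← Matrix.mul_assoc, Pp_symp h₂]
  · exact hU.1
  · intro i; exact hU.2 (Sum.inl i)

end SympSyl
open SympSyl in
/-- The set of block matrices `[[A, A·B],[0, (Aᵀ)⁻¹]]` with `A` unitriangular and `B`
symmetric is a Sylow `p`-subgroup of the symplectic group `Sp(2n, F)`. -/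
theorem symplectic_sylow (p r n : ℕ) (hp : p.Prime) (hr : 0 < r) (hn : 1 ≤ n)
    (F : Type) [Field F] [Fintype F] (hF : Fintype.card F = p ^ r)
    (Sp : Subgroup (GL (Fin n ⊕ Fin n) F))
    (hSp : ∀ M : GL (Fin n ⊕ Fin n) F, M ∈ Sp ↔
      (M : Matrix (Fin n ⊕ Fin n) (Fin n ⊕ Fin n) F)ᵀ *
          Matrix.fromBlocks (0 : Matrix (Fin n) (Fin n) F) 1 (-1) 0 *
          (M : Matrix (Fin n ⊕ Fin n) (Fin n ⊕ Fin n) F) =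
        Matrix.fromBlocks (0 : Matrix (Fin n) (Fin n) F) 1 (-1) 0) :
    ∃ P : Sylow p ↥Sp, ∀ M : ↥Sp,
      M ∈ P ↔ ∃ A B : Matrix (Fin n) (Fin n) F,
        IsUnitriangular A ∧ Bᵀ = B ∧
        ((M : GL (Fin n ⊕ Fin n) F) : Matrix (Fin n ⊕ Fin n) (Fin n ⊕ Fin n) F) =
          Matrix.fromBlocks A (A * B) 0 (Aᵀ)⁻¹ := by
  classical
  haveI : Fact p.Prime := ⟨hp⟩
  haveI : CharP F p := charP_of_card hp hF
  haveI : Finite (GL (Fin n ⊕ Fin n) F) :=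
    Finite.of_injective (Units.val) Units.val_injective
  set toM : ↥Sp → Matrix (Fin n ⊕ Fin n) (Fin n ⊕ Fin n) F :=
    fun M => ((M : GL (Fin n ⊕ Fin n) F) : Matrix (Fin n ⊕ Fin n) (Fin n ⊕ Fin n) F)
    with htoM
  have toM_mul : ∀ x y : ↥Sp, toM (x * y) = toM x * toM y := fun x y => rfl
  have toM_one : toM 1 = 1 := rfl
  have toM_inj : ∀ {x y : ↥Sp}, toM x = toM y → x = y :=
    fun h => Subtype.ext (Units.ext h)
  have toM_pow : ∀ (x : ↥Sp) (k : ℕ), toM (x ^ k) = toM x ^ k := by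
    intro x k
    induction k with
    | zero => rw [pow_zero, pow_zero]; exact toM_one
    | succ k ih => rw [pow_succ, pow_succ, toM_mul, ih]
  -- the candidate subgroup
  let P' : Subgroup ↥Sp :=
    { carrier := {M : ↥Sp | Pp (toM M)}
      one_mem' := by
        show Pp (toM 1)
        rw [toM_one]; exact Pp_one
      mul_mem' := by
        intro x y hx hy
        show Pp (toM (x * y))
        rw [toM_mul]
        exact Pp_mul hx hy
      inv_mem' := by
        intro x hx
        have hpow : ∀ k : ℕ, Pp (toM (x ^ k)) := by
          intro k
          induction k with
          | zero => rw [pow_zero, toM_one]; exact Pp_one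
          | succ k ih => rw [pow_succ, toM_mul]; exact Pp_mul ih hx
        have ho : 0 < orderOf x := orderOf_pos x
        have hx1 : x * x ^ (orderOf x - 1) = 1 := by
          rw [← pow_succ', Nat.sub_add_cancel ho, pow_orderOf_eq_one]
        show Pp (toM x⁻¹)
        rw [inv_eq_of_mul_eq_one_right hx1]
        exact hpow _ }
  have memP' : ∀ M : ↥Sp, M ∈ P' ↔ Pp (toM M) := fun M => Iff.rfl
  -- P' is a p-group
  have hPgrp : IsPGroup p ↥P' := by
    intro g
    refine ⟨2 * n, ?_⟩
    have hco : ((g : ↥Sp)) ^ (p ^ (2 * n)) = 1 :=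
      toM_inj (by rw [toM_pow, toM_one, Pp_pow_eq_one hp hn g.2])
    refine Subtype.ext ?_
    rw [SubmonoidClass.coe_pow, OneMemClass.coe_one]
    exact hco
  -- maximality
  have hmax : ∀ {Q : Subgroup ↥Sp}, IsPGroup p ↥Q → P' ≤ Q → Q = P' := by
    intro Q hQ hle
    refine le_antisymm ?_ hle
    by_contra hnle
    obtain ⟨q, hqQ, hqP⟩ := SetLike.not_le_iff_exists.mp hnle
    set H := P'.subgroupOf Q with hH
    have hHne : H ≠ ⊤ := by
      intro htop
      exact hqP (Subgroup.mem_subgroupOf.mp (htop ▸ Subgroup.mem_top (⟨q, hqQ⟩ : ↥Q)))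
    have hnc : NormalizerCondition ↥Q := @normalizerCondition_of_isNilpotent _ _ hQ.isNilpotent
    have hlt : H < Subgroup.normalizer (H : Set ↥Q) := hnc H (lt_top_iff_ne_top.mpr hHne)
    obtain ⟨x, hxn, hxH⟩ := SetLike.exists_of_lt hlt
    set g : ↥Sp := (x : ↥Sp) with hgdef
    have hconj : ∀ m_ : Matrix (Fin n ⊕ Fin n) (Fin n ⊕ Fin n) F,
        Pp m_ → Pp (toM g⁻¹ * m_ * toM g) := by
      intro m_ hm
      obtain ⟨mi, h1, h2⟩ := Pp_exists_inv hm
      have huSp : (⟨m_, mi, h1, h2⟩ : GL (Fin n ⊕ Fin n) F) ∈ Sp :=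
        (hSp _).mpr (Pp_symp hm)
      set eS : ↥Sp := ⟨⟨m_, mi, h1, h2⟩, huSp⟩ with heS
      have heP : eS ∈ P' := hm
      have heQ : eS ∈ Q := hle heP
      set eQ : ↥Q := ⟨eS, heQ⟩ with heQdef
      have hmem : x⁻¹ * eQ * x ∈ H := by
        apply (Subgroup.mem_normalizer_iff.mp hxn (x⁻¹ * eQ * x)).mpr
        have e : x * (x⁻¹ * eQ * x) * x⁻¹ = eQ := by group
        rw [e]
        exact Subgroup.mem_subgroupOf.mpr heP
      have hPelt : Pp (toM ((x⁻¹ * eQ * x : ↥Q) : ↥Sp)) :=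
        Subgroup.mem_subgroupOf.mp hmem
      have hcoe : ((x⁻¹ * eQ * x : ↥Q) : ↥Sp) = g⁻¹ * eS * g := rfl
      rw [hcoe, toM_mul, toM_mul] at hPelt
      exact hPelt
    have hgi : toM g * toM g⁻¹ = 1 := by rw [← toM_mul, mul_inv_cancel, toM_one]
    have htri : (toM g).BlockTriangular (ord n) := g_tri hgi hconj
    obtain ⟨K, hK⟩ := hQ x
    have hgp : toM g ^ p ^ K = 1 := by
      have hco : (g : ↥Sp) ^ p ^ K = 1 := by
        have := congrArg (fun z : ↥Q => (z : ↥Sp)) hK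
        simpa using this
      rw [← toM_pow, hco, toM_one]
    have hsymp := (hSp (g : GL (Fin n ⊕ Fin n) F)).mp g.2
    have hdiag : ∀ i : Fin n, toM g (Sum.inl i) (Sum.inl i) = 1 := fun i =>
      diag_one_of_pow hp htri hgp _
    have hPg : Pp (toM g) := Pp_of_triangular hsymp htri hdiag
    exact hxH (Subgroup.mem_subgroupOf.mpr hPg)
  exact ⟨⟨P', hPgrp, fun {Q} hQ hle => hmax hQ hle⟩, fun M => Iff.rfl⟩
end
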